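/- arXiv:0811.4191 — 7 statements merged into one kernel-verified Lean document; each statement's English description precedes it below -/
import Mathlib

section
/- Let L ≥ 1 be a fixed integer and ε ∈ (0,1). Then lim_{SNR→∞} [ C_ε^L(SNR) − log₂(SNR) ] = F_ε^{-1}( (1/L)·Σ_{i=1}^L log₂(H_i) ), i.e., the ε-outage capacity admits the high-SNR affine expansion C_ε^L(SNR) = log₂(SNR) + F_ε^{-1}((1/L)Σ_{i=1}^L log₂ H_i) + o(1). -/
open MeasureTheory ProbabilityTheory Real Filter Topology

lemma expMeasure_one_Iic_zero : expMeasure 1 (Set.Iic (0:ℝ)) = 0 := by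
  rw [expMeasure, gammaMeasure, withDensity_apply _ measurableSet_Iic,
    setLIntegral_congr (MeasureTheory.Iio_ae_eq_Iic (a := (0:ℝ))).symm]
  exact lintegral_gammaPDF_of_nonpos le_rfl

lemma expMeasure_one_Ioo_pos {c d : ℝ} (hc : 0 < c) (hcd : c < d) :
    0 < expMeasure 1 (Set.Ioo c d) := by
  rw [expMeasure, gammaMeasure, withDensity_apply _ measurableSet_Ioo]
  simp only [gammaPDF]
  rw [setLIntegral_pos_iff ((measurable_gammaPDFReal 1 1).ennreal_ofReal)]
  have hsub : Set.Ioo c d ⊆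
      Function.support (fun x => ENNReal.ofReal (gammaPDFReal 1 1 x)) ∩ Set.Ioo c d := by
    intro x hx
    refine ⟨?_, hx⟩
    have hxpos : 0 < x := hc.trans hx.1
    have : 0 < ENNReal.ofReal (gammaPDFReal 1 1 x) :=
      ENNReal.ofReal_pos.mpr (gammaPDFReal_pos one_pos one_pos hxpos)
    exact Function.mem_support.mpr this.ne'
  refine lt_of_lt_of_le ?_ (measure_mono hsub)
  rw [Real.volume_Ioo]
  exact ENNReal.ofReal_pos.mpr (by linarith)

/-- High-SNR affine expansion of the ε-outage capacity:
`C_ε^L(SNR) = log₂ SNR + F_ε⁻¹((1/L)·Σ log₂ Hᵢ) + o(1)` as `SNR → ∞`. -/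
theorem outage_capacity_high_snr_affine
    {Ω : Type*} [MeasurableSpace Ω] (μ : Measure Ω) [IsProbabilityMeasure μ]
    (H : ℕ → Ω → ℝ) (hmeas : ∀ i, Measurable (H i))
    (hindep : iIndepFun H μ)
    (hdist : ∀ i, Measure.map (H i) μ = expMeasure 1)
    (L : ℕ) (hL : 1 ≤ L) (ε : ℝ) (hε : ε ∈ Set.Ioo (0:ℝ) 1)
    (C : ℝ → ℝ)
    (hC : ∀ snr > (0:ℝ), 0 < C snr ∧
      (μ {ω | (1 / (L:ℝ)) * ∑ i ∈ Finset.range L,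
          Real.logb 2 (1 + snr * H i ω) ≤ C snr}).toReal = ε)
    (y : ℝ)
    (hy : (μ {ω | (1 / (L:ℝ)) * ∑ i ∈ Finset.range L,
          Real.logb 2 (H i ω) ≤ y}).toReal = ε) :
    Tendsto (fun snr => C snr - Real.logb 2 snr) atTop (𝓝 y) := by
  obtain ⟨hε0, hε1⟩ := hε
  have hLpos : (0:ℝ) < L := by exact_mod_cast hL
  set Y : Ω → ℝ := fun ω => (1 / (L:ℝ)) * ∑ i ∈ Finset.range L, Real.logb 2 (H i ω) with hYdef
  have hy' : (μ {ω | Y ω ≤ y}).toReal = ε := hy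
  have hmlogb : ∀ i, Measurable fun ω => Real.logb 2 (H i ω) := fun i =>
    (Real.measurable_log.comp (hmeas i)).div_const _
  have hmY : Measurable Y :=
    (Finset.measurable_sum _ fun i _ => hmlogb i).const_mul _
  have hfin : ∀ s : Set Ω, μ s ≠ ⊤ := fun s => measure_ne_top μ s
  set G : Set Ω := {ω | ∀ i ∈ Finset.range L, 0 < H i ω} with hGdef
  have hGc : μ Gᶜ = 0 := by
    have hsub : Gᶜ ⊆ ⋃ i ∈ (Finset.range L : Finset ℕ), (H i) ⁻¹' Set.Iic 0 := by
      intro ω hω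
      simp only [hGdef, Set.mem_compl_iff, Set.mem_setOf_eq, not_forall] at hω
      obtain ⟨i, hi, hneg⟩ := hω
      exact Set.mem_biUnion hi (by simpa using le_of_not_gt hneg)
    refine measure_mono_null hsub ?_
    refine (measure_biUnion_null_iff (Finset.range L : Finset ℕ).countable_toSet).mpr
      fun i _ => ?_
    rw [← Measure.map_apply (hmeas i) measurableSet_Iic, hdist i]
    exact expMeasure_one_Iic_zero
  -- positivity of the distribution of Y on open intervals
  have hpos : ∀ a b : ℝ, a < b → 0 < μ {ω | Y ω ∈ Set.Ioo a b} := by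
    intro a b hab
    have hc : (0:ℝ) < (2:ℝ) ^ a := Real.rpow_pos_of_pos two_pos a
    have hcd : (2:ℝ) ^ a < (2:ℝ) ^ b := by
      exact Real.rpow_lt_rpow_left_iff one_lt_two |>.mpr hab
    have hsub : (⋂ i ∈ (Finset.range L : Finset ℕ),
        (H i) ⁻¹' Set.Ioo ((2:ℝ) ^ a) ((2:ℝ) ^ b)) ⊆ {ω | Y ω ∈ Set.Ioo a b} := by
      intro ω hω
      simp only [Set.mem_iInter, Set.mem_preimage, Set.mem_Ioo] at hω
      have h1 : ∀ i ∈ Finset.range L,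
          a < Real.logb 2 (H i ω) ∧ Real.logb 2 (H i ω) < b := by
        intro i hi
        obtain ⟨ha1, ha2⟩ := hω i hi
        constructor
        · have := Real.logb_lt_logb one_lt_two hc ha1
          rwa [Real.logb_rpow two_pos (by norm_num)] at this
        · have := Real.logb_lt_logb one_lt_two (hc.trans ha1) ha2
          rwa [Real.logb_rpow two_pos (by norm_num)] at this
      have hsum1 : (L:ℝ) * a < ∑ i ∈ Finset.range L, Real.logb 2 (H i ω) := by
        calc (L:ℝ) * a = ∑ _i ∈ Finset.range L, a := by
              rw [Finset.sum_const, Finset.card_range, nsmul_eq_mul]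
          _ < _ := Finset.sum_lt_sum_of_nonempty
                (Finset.nonempty_range_iff.mpr (by omega)) (fun i hi => (h1 i hi).1)
      have hsum2 : ∑ i ∈ Finset.range L, Real.logb 2 (H i ω) < (L:ℝ) * b := by
        calc ∑ i ∈ Finset.range L, Real.logb 2 (H i ω)
            < ∑ _i ∈ Finset.range L, b := Finset.sum_lt_sum_of_nonempty
                (Finset.nonempty_range_iff.mpr (by omega)) (fun i hi => (h1 i hi).2)
          _ = (L:ℝ) * b := by rw [Finset.sum_const, Finset.card_range, nsmul_eq_mul]
      have hYω : Y ω = (∑ i ∈ Finset.range L, Real.logb 2 (H i ω)) / L := by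
        rw [hYdef]; ring
      simp only [Set.mem_setOf_eq, Set.mem_Ioo, hYω]
      constructor
      · rw [lt_div_iff₀ hLpos]; linarith
      · rw [div_lt_iff₀ hLpos]; linarith
    refine lt_of_lt_of_le ?_ (measure_mono hsub)
    have heq : μ (⋂ i ∈ (Finset.range L : Finset ℕ),
        (H i) ⁻¹' Set.Ioo ((2:ℝ) ^ a) ((2:ℝ) ^ b))
        = ∏ i ∈ Finset.range L, μ ((H i) ⁻¹' Set.Ioo ((2:ℝ) ^ a) ((2:ℝ) ^ b)) :=
      hindep.meas_biInter (fun i _ => ⟨Set.Ioo _ _, measurableSet_Ioo, rfl⟩)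
    rw [heq]
    have hval : ∀ i : ℕ, μ ((H i) ⁻¹' Set.Ioo ((2:ℝ) ^ a) ((2:ℝ) ^ b))
        = expMeasure 1 (Set.Ioo ((2:ℝ) ^ a) ((2:ℝ) ^ b)) := fun i => by
      rw [← Measure.map_apply (hmeas i) measurableSet_Ioo, hdist i]
    rw [Finset.prod_congr rfl fun i _ => hval i, Finset.prod_const]
    exact ENNReal.pow_pos (expMeasure_one_Ioo_pos hc hcd) _
  -- CDF of Y strictly below ε to the left of y
  have hlow : ∀ δ : ℝ, 0 < δ → (μ {ω | Y ω ≤ y - δ}).toReal < ε := by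
    intro δ hδ
    have hdisj : Disjoint {ω | Y ω ≤ y - δ} {ω | Y ω ∈ Set.Ioo (y - δ) y} := by
      rw [Set.disjoint_left]
      intro ω h1 h2
      exact absurd h2.1 (not_lt.mpr h1)
    have hsub : {ω | Y ω ≤ y - δ} ∪ {ω | Y ω ∈ Set.Ioo (y - δ) y} ⊆ {ω | Y ω ≤ y} := by
      rintro ω (h | h)
      · simp only [Set.mem_setOf_eq] at h ⊢; linarith
      · exact le_of_lt h.2
    have key : μ {ω | Y ω ≤ y - δ} + μ {ω | Y ω ∈ Set.Ioo (y - δ) y} ≤ μ {ω | Y ω ≤ y} := by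
      rw [← measure_union hdisj (hmY measurableSet_Ioo)]
      exact measure_mono hsub
    have h2 : (μ {ω | Y ω ≤ y - δ}).toReal + (μ {ω | Y ω ∈ Set.Ioo (y - δ) y}).toReal ≤ ε := by
      rw [← hy', ← ENNReal.toReal_add (hfin _) (hfin _)]
      exact ENNReal.toReal_mono (hfin _) key
    have h3 : 0 < (μ {ω | Y ω ∈ Set.Ioo (y - δ) y}).toReal :=
      ENNReal.toReal_pos (hpos _ _ (by linarith)).ne' (hfin _)
    linarith
  -- CDF of Y strictly above ε to the right of y
  have hup : ∀ δ : ℝ, 0 < δ → ε < (μ {ω | Y ω < y + δ}).toReal := by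
    intro δ hδ
    have hdisj : Disjoint {ω | Y ω ≤ y} {ω | Y ω ∈ Set.Ioo y (y + δ)} := by
      rw [Set.disjoint_left]
      intro ω h1 h2
      exact absurd h2.1 (not_lt.mpr h1)
    have hsub : {ω | Y ω ≤ y} ∪ {ω | Y ω ∈ Set.Ioo y (y + δ)} ⊆ {ω | Y ω < y + δ} := by
      rintro ω (h | h)
      · simp only [Set.mem_setOf_eq] at h ⊢; linarith
      · exact h.2
    have key : μ {ω | Y ω ≤ y} + μ {ω | Y ω ∈ Set.Ioo y (y + δ)} ≤ μ {ω | Y ω < y + δ} := by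
      rw [← measure_union hdisj (hmY measurableSet_Ioo)]
      exact measure_mono hsub
    have h2 : (μ {ω | Y ω ≤ y}).toReal + (μ {ω | Y ω ∈ Set.Ioo y (y + δ)}).toReal
        ≤ (μ {ω | Y ω < y + δ}).toReal := by
      rw [← ENNReal.toReal_add (hfin _) (hfin _)]
      exact ENNReal.toReal_mono (hfin _) key
    have h3 : 0 < (μ {ω | Y ω ∈ Set.Ioo y (y + δ)}).toReal :=
      ENNReal.toReal_pos (hpos _ _ (by linarith)).ne' (hfin _)
    rw [hy'] at h2
    linarith
  -- decomposition of the outage random variable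
  have hdecomp : ∀ s : ℝ, 0 < s → ∀ ω : Ω, (∀ i ∈ Finset.range L, 0 < H i ω) →
      (1 / (L:ℝ)) * ∑ i ∈ Finset.range L, Real.logb 2 (1 + s * H i ω)
        = Real.logb 2 s + (1 / (L:ℝ)) * ∑ i ∈ Finset.range L, Real.logb 2 (s⁻¹ + H i ω) := by
    intro s hs ω hω
    have hterm : ∀ i ∈ Finset.range L, Real.logb 2 (1 + s * H i ω)
        = Real.logb 2 s + Real.logb 2 (s⁻¹ + H i ω) := by
      intro i hi
      have h1 : (0:ℝ) < s⁻¹ + H i ω := add_pos (inv_pos.mpr hs) (hω i hi)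
      have h2 : 1 + s * H i ω = s * (s⁻¹ + H i ω) := by field_simp
      rw [h2, Real.logb_mul hs.ne' h1.ne']
    rw [Finset.sum_congr rfl hterm, Finset.sum_add_distrib, Finset.sum_const,
      Finset.card_range, nsmul_eq_mul, mul_add]
    congr 1
    field_simp
  -- lower bound, valid for all positive snr
  have hlower : ∀ δ : ℝ, 0 < δ → ∀ s : ℝ, 0 < s → y - δ < C s - Real.logb 2 s := by
    intro δ hδ s hs
    by_contra hcon
    push_neg at hcon
    have hsub : {ω | (1 / (L:ℝ)) * ∑ i ∈ Finset.range L,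
        Real.logb 2 (1 + s * H i ω) ≤ C s} ⊆ {ω | Y ω ≤ y - δ} ∪ Gᶜ := by
      intro ω hω
      by_cases hωG : ω ∈ G
      · left
        have hωpos : ∀ i ∈ Finset.range L, 0 < H i ω := hωG
        have hωle : (1 / (L:ℝ)) * ∑ i ∈ Finset.range L,
            Real.logb 2 (1 + s * H i ω) ≤ C s := hω
        have hYle : Y ω ≤ (1 / (L:ℝ)) * ∑ i ∈ Finset.range L,
            Real.logb 2 (s⁻¹ + H i ω) := by
          refine mul_le_mul_of_nonneg_left (Finset.sum_le_sum fun i hi => ?_) (by positivity)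
          exact Real.logb_le_logb_of_le one_lt_two (hωpos i hi)
            (le_add_of_nonneg_left (inv_pos.mpr hs).le)
        have hde := hdecomp s hs ω hωpos
        rw [hde] at hωle
        simp only [Set.mem_setOf_eq]
        linarith
      · right; exact hωG
    have h1 : ε ≤ (μ ({ω | Y ω ≤ y - δ} ∪ Gᶜ)).toReal := by
      rw [← (hC s hs).2]
      exact ENNReal.toReal_mono (hfin _) (measure_mono hsub)
    have h2 : μ ({ω | Y ω ≤ y - δ} ∪ Gᶜ) ≤ μ {ω | Y ω ≤ y - δ} :=
      le_trans (measure_union_le _ _) (by rw [hGc, add_zero])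
    have h3 := ENNReal.toReal_mono (hfin _) h2
    have h4 := hlow δ hδ
    linarith
  -- upper bound, valid for large snr
  have hupper : ∀ δ : ℝ, 0 < δ → ∃ N : ℕ, ∀ s : ℝ, (N:ℝ) + 1 ≤ s → 0 < s →
      C s - Real.logb 2 s < y + δ := by
    intro δ hδ
    set T : ℕ → Ω → ℝ := fun n ω => (1 / (L:ℝ)) * ∑ i ∈ Finset.range L,
      Real.logb 2 (((n:ℝ) + 1)⁻¹ + H i ω) with hTdef
    set S : ℕ → Set Ω := fun n => G ∩ {ω | T n ω ≤ y + δ} with hSdef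
    have hmono : Monotone S := by
      intro m n hmn ω hω
      obtain ⟨hωG, hωT⟩ := hω
      have hωG' : ∀ i ∈ Finset.range L, 0 < H i ω := hωG
      have hωT' : T m ω ≤ y + δ := hωT
      refine ⟨hωG, ?_⟩
      have hle : T n ω ≤ T m ω := by
        refine mul_le_mul_of_nonneg_left (Finset.sum_le_sum fun i hi => ?_) (by positivity)
        refine Real.logb_le_logb_of_le one_lt_two
          (add_pos (by positivity) (hωG' i hi)) ?_
        have : ((m:ℝ) + 1)⁻¹ ≥ ((n:ℝ) + 1)⁻¹ := by
          gcongr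
        linarith
      show T n ω ≤ y + δ
      linarith
    have hsubU : G ∩ {ω | Y ω < y + δ} ⊆ ⋃ n, S n := by
      rintro ω ⟨hωG, hωY⟩
      have hωG' : ∀ i ∈ Finset.range L, 0 < H i ω := hωG
      have hωY' : Y ω < y + δ := hωY
      have htend : Tendsto (fun n : ℕ => T n ω) atTop (𝓝 (Y ω)) := by
        refine Tendsto.const_mul _ (tendsto_finset_sum _ fun i hi => ?_)
        have h0 : (0:ℝ) < H i ω := hωG' i hi
        have h1 : Tendsto (fun n : ℕ => ((n:ℝ) + 1)⁻¹ + H i ω) atTop (𝓝 (H i ω)) := by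
          have h2 := tendsto_one_div_add_atTop_nhds_zero_nat (𝕜 := ℝ)
          have := h2.add_const (H i ω)
          simpa [one_div] using this
        have h2 : Tendsto (fun n : ℕ => Real.log (((n:ℝ) + 1)⁻¹ + H i ω)) atTop
            (𝓝 (Real.log (H i ω))) := (Real.continuousAt_log h0.ne').tendsto.comp h1
        simpa [Real.logb] using h2.div_const (Real.log 2)
      obtain ⟨n, hn⟩ := (htend.eventually_lt_const hωY').exists
      exact Set.mem_iUnion.mpr ⟨n, hωG, le_of_lt hn⟩
    have hU : ENNReal.ofReal ε < μ (⋃ n, S n) := by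
      have h1 : μ {ω | Y ω < y + δ} ≤ μ (⋃ n, S n) := by
        calc μ {ω | Y ω < y + δ}
            ≤ μ ((G ∩ {ω | Y ω < y + δ}) ∪ Gᶜ) := measure_mono (by
              intro ω hω
              by_cases h : ω ∈ G
              exacts [Or.inl ⟨h, hω⟩, Or.inr h])
          _ ≤ μ (G ∩ {ω | Y ω < y + δ}) + μ Gᶜ := measure_union_le _ _
          _ = μ (G ∩ {ω | Y ω < y + δ}) := by rw [hGc, add_zero]
          _ ≤ _ := measure_mono hsubU
      refine lt_of_lt_of_le ?_ h1
      exact (ENNReal.ofReal_lt_iff_lt_toReal hε0.le (hfin _)).mpr (hup δ hδ)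
    rw [hmono.measure_iUnion] at hU
    obtain ⟨N, hN⟩ := lt_iSup_iff.mp hU
    refine ⟨N, fun s hsN hs => ?_⟩
    by_contra hcon
    push_neg at hcon
    have hsub2 : S N ⊆ {ω | (1 / (L:ℝ)) * ∑ i ∈ Finset.range L,
        Real.logb 2 (1 + s * H i ω) ≤ C s} := by
      rintro ω ⟨hωG, hωT⟩
      have hωG' : ∀ i ∈ Finset.range L, 0 < H i ω := hωG
      have hωT' : T N ω ≤ y + δ := hωT
      simp only [Set.mem_setOf_eq]
      rw [hdecomp s hs ω hωG']
      have hTs : (1 / (L:ℝ)) * ∑ i ∈ Finset.range L, Real.logb 2 (s⁻¹ + H i ω)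
          ≤ T N ω := by
        refine mul_le_mul_of_nonneg_left (Finset.sum_le_sum fun i hi => ?_) (by positivity)
        refine Real.logb_le_logb_of_le one_lt_two
          (add_pos (inv_pos.mpr hs) (hωG' i hi)) ?_
        have h5 : s⁻¹ ≤ ((N:ℝ) + 1)⁻¹ := by
          gcongr
        linarith
      linarith
    have h6 : ENNReal.ofReal ε < μ {ω | (1 / (L:ℝ)) * ∑ i ∈ Finset.range L,
        Real.logb 2 (1 + s * H i ω) ≤ C s} := lt_of_lt_of_le hN (measure_mono hsub2)
    have h7 := (ENNReal.ofReal_lt_iff_lt_toReal hε0.le (hfin _)).mp h6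
    rw [(hC s hs).2] at h7
    exact lt_irrefl ε h7
  -- conclusion
  rw [Metric.tendsto_atTop]
  intro δ hδ
  obtain ⟨N, hN⟩ := hupper δ hδ
  refine ⟨(N:ℝ) + 1, fun s hs => ?_⟩
  have hs0 : (0:ℝ) < s := lt_of_lt_of_le (by positivity) hs
  have h1 := hlower δ hδ s hs0
  have h2 := hN s hs hs0
  rw [Real.dist_eq, abs_lt]
  constructor <;> linarith
end

section
/- For any fixed SNR > 0 and any ε ∈ (0,1), the ε-outage capacity converges to the ergodic capacity as the diversity order grows: lim_{L→∞} C_ε^L(SNR) = μ(SNR). -/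
open MeasureTheory ProbabilityTheory Real Filter Topology
open scoped ENNReal

lemma measurable_g (snr : ℝ) : Measurable (fun x : ℝ => Real.logb 2 (1 + snr * x)) := by
  simp only [Real.logb]
  exact (Real.measurable_log.comp (measurable_const.add (measurable_const.mul
    measurable_id))).div_const _

lemma integrable_g (snr : ℝ) (hsnr : 0 < snr) :
    Integrable (fun x : ℝ => Real.logb 2 (1 + snr * x)) (expMeasure 1) := by
  have hg := measurable_g snr
  have hpdfmeas : Measurable (gammaPDF 1 1) := (measurable_gammaPDFReal 1 1).ennreal_ofReal
  rw [expMeasure, gammaMeasure, integrable_withDensity_iff hpdfmeas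
    (Filter.Eventually.of_forall fun x => by simp [gammaPDF, ENNReal.ofReal_lt_top])]
  -- majorant
  have hmaj : Integrable
      (Set.indicator (Set.Ici (0:ℝ)) (fun x => (snr / Real.log 2) * (Real.exp (-x) * x)))
      (volume : Measure ℝ) := by
    rw [integrable_indicator_iff measurableSet_Ici]
    have hIoi : IntegrableOn (fun x => Real.exp (-x) * x) (Set.Ioi (0:ℝ)) := by
      have h2 := Real.GammaIntegral_convergent (by norm_num : (0:ℝ) < 2)
      simpa [show (2:ℝ) - 1 = 1 by norm_num, Real.rpow_one] using h2
    have hIci : IntegrableOn (fun x => Real.exp (-x) * x) (Set.Ici (0:ℝ)) :=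
      (integrableOn_Ici_iff_integrableOn_Ioi).mpr hIoi
    exact hIci.const_mul _
  refine hmaj.mono' ?_ ?_
  · exact (hg.mul (hpdfmeas.ennreal_toReal)).aestronglyMeasurable
  · refine Filter.Eventually.of_forall fun x => ?_
    rcases le_or_gt 0 x with hx | hx
    · have hpdf : (gammaPDF 1 1 x).toReal = Real.exp (-x) := by
        rw [gammaPDF_of_nonneg hx, show (1:ℝ) - 1 = 0 from sub_self 1, Real.rpow_zero,
          Real.Gamma_one, Real.one_rpow]
        rw [show (1:ℝ)/1 * 1 * Real.exp (-(1*x)) = Real.exp (-x) by norm_num]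
        exact ENNReal.toReal_ofReal (Real.exp_pos _).le
      rw [hpdf, Set.indicator_of_mem (Set.mem_Ici.mpr hx)]
      have h1x : (1:ℝ) ≤ 1 + snr * x := by nlinarith
      have hlog_nonneg : 0 ≤ Real.logb 2 (1 + snr * x) :=
        Real.logb_nonneg one_lt_two h1x
      have hlog_le : Real.logb 2 (1 + snr * x) ≤ snr * x / Real.log 2 := by
        rw [Real.logb]
        have hlp := Real.log_pos one_lt_two
        have := Real.log_le_sub_one_of_pos (lt_of_lt_of_le zero_lt_one h1x)
        apply div_le_div_of_nonneg_right ?_ ?_ <;> linarith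
      rw [Real.norm_eq_abs, abs_mul, abs_of_nonneg hlog_nonneg,
        abs_of_nonneg (Real.exp_pos _).le]
      calc Real.logb 2 (1 + snr * x) * Real.exp (-x)
          ≤ (snr * x / Real.log 2) * Real.exp (-x) :=
            mul_le_mul_of_nonneg_right hlog_le (Real.exp_pos _).le
        _ = snr / Real.log 2 * (Real.exp (-x) * x) := by ring
    · have hpdf : gammaPDFReal 1 1 x = 0 := by
        simp [gammaPDFReal, if_neg (not_le.mpr hx)]
      rw [gammaPDF, hpdf]
      simp [Set.indicator_of_notMem (Set.notMem_Ici.mpr hx)]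

/-- For fixed `SNR > 0` and `ε ∈ (0,1)`, the ε-outage capacity converges to the
ergodic capacity `μ(SNR) = E[log₂(1 + SNR·H₁)]` as the diversity order `L → ∞`. -/
theorem outage_capacity_tendsto_ergodic
    {Ω : Type*} [MeasurableSpace Ω] (μ : Measure Ω) [IsProbabilityMeasure μ]
    (H : ℕ → Ω → ℝ) (hmeas : ∀ i, Measurable (H i))
    (hindep : iIndepFun H μ)
    (hdist : ∀ i, Measure.map (H i) μ = expMeasure 1)
    (snr : ℝ) (hsnr : 0 < snr) (ε : ℝ) (hε : ε ∈ Set.Ioo (0:ℝ) 1)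
    (C : ℕ → ℝ)
    (hC : ∀ L, 1 ≤ L → 0 < C L ∧
      (μ {ω | (1 / (L:ℝ)) * ∑ i ∈ Finset.range L,
          Real.logb 2 (1 + snr * H i ω) ≤ C L}).toReal = ε) :
    Tendsto (fun L => C L) atTop (𝓝 (∫ ω, Real.logb 2 (1 + snr * H 0 ω) ∂μ)) := by
  set g : ℝ → ℝ := fun x => Real.logb 2 (1 + snr * x) with hgdef
  have hg : Measurable g := measurable_g snr
  set Y : ℕ → Ω → ℝ := fun i ω => g (H i ω) with hYdef
  have hYmeas : ∀ i, Measurable (Y i) := fun i => hg.comp (hmeas i)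
  have hident : ∀ i, IdentDistrib (Y i) (Y 0) μ μ := by
    intro i
    have h0 : IdentDistrib (H i) (H 0) μ μ :=
      ⟨(hmeas i).aemeasurable, (hmeas 0).aemeasurable, by rw [hdist i, hdist 0]⟩
    exact h0.comp hg
  have hint : Integrable (Y 0) μ := by
    have h1 : Integrable g (Measure.map (H 0) μ) := by
      rw [hdist 0]; exact integrable_g snr hsnr
    exact (integrable_map_measure hg.aestronglyMeasurable (hmeas 0).aemeasurable).mp h1
  have hpair : Pairwise (Function.onFun (IndepFun · · μ) Y) :=
    fun i j hij => (hindep.indepFun hij).comp hg hg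
  have hae := strong_law_ae_real Y hint hpair hident
  set M : ℝ := ∫ ω, Y 0 ω ∂μ with hMdef
  set S : ℕ → Ω → ℝ := fun n ω => (∑ i ∈ Finset.range n, Y i ω) / n with hSdef
  have hSmeas : ∀ n, Measurable (S n) := fun n =>
    (Finset.measurable_sum _ (fun i _ => hYmeas i)).div_const _
  have htm : TendstoInMeasure μ S atTop (fun _ => M) :=
    tendstoInMeasure_of_tendsto_ae (fun n => (hSmeas n).aestronglyMeasurable) hae
  -- rephrase hC using S
  have hC' : ∀ L, 1 ≤ L → (μ {ω | S L ω ≤ C L}).toReal = ε := by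
    intro L hL
    have := (hC L hL).2
    convert this using 3
    ext ω
    simp [hSdef, hYdef, hgdef, div_eq_inv_mul, one_div]
  rw [Metric.tendsto_atTop]
  intro δ hδ
  set η : ℝ := min ε (1 - ε) with hηdef
  have hη : 0 < η := lt_min hε.1 (by linarith [hε.2])
  have htm' : Tendsto (fun n => (μ {ω | δ ≤ dist (S n ω) M}).toReal) atTop (𝓝 0) := by
    have := tendstoInMeasure_iff_dist.mp htm δ hδ
    have h0 : (0:ℝ≥0∞) ≠ ⊤ := ENNReal.zero_ne_top
    simpa [Function.comp_def] using (ENNReal.tendsto_toReal h0).comp this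
  have hev : ∀ᶠ n in atTop, (μ {ω | δ ≤ dist (S n ω) M}).toReal < η := by
    have := htm'.eventually (eventually_lt_nhds hη)
    simpa using this
  obtain ⟨N, hN⟩ := eventually_atTop.mp (hev.and (eventually_ge_atTop 1))
  refine ⟨N, fun n hn => ?_⟩
  obtain ⟨hsmall, hL1⟩ := hN n hn
  have hεn := hC' n hL1
  set A : Set Ω := {ω | δ ≤ dist (S n ω) M} with hAdef
  have hAmeas : MeasurableSet A :=
    measurableSet_le measurable_const ((hSmeas n).dist measurable_const)
  have ha := hsmall
  rw [Real.dist_eq, abs_sub_lt_iff]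
  constructor
  · -- C n < M + δ, i.e. ¬ (M + δ ≤ C n)
    by_contra hcon
    push_neg at hcon
    -- hcon : δ ≤ C n - M i.e. M + δ ≤ C n
    have hsub : Aᶜ ⊆ {ω | S n ω ≤ C n} := by
      intro ω hω
      simp only [hAdef, Set.mem_compl_iff, Set.mem_setOf_eq, not_le] at hω
      have : |S n ω - M| < δ := by rwa [Real.dist_eq] at hω
      have := (abs_sub_lt_iff.mp this).1
      simp only [Set.mem_setOf_eq]
      linarith
    have hcompl : (μ Aᶜ).toReal = 1 - (μ A).toReal := by
      rw [measure_compl hAmeas (measure_ne_top μ A), measure_univ,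
        ENNReal.toReal_sub_of_le prob_le_one (by simp)]
      simp
    have h1 : (μ Aᶜ).toReal ≤ (μ {ω | S n ω ≤ C n}).toReal :=
      ENNReal.toReal_mono (measure_ne_top μ _) (measure_mono hsub)
    rw [hcompl, hεn] at h1
    have : η ≤ 1 - ε := min_le_right _ _
    linarith
  ·
    by_contra hcon
    push_neg at hcon
    -- hcon : δ ≤ M - C n, i.e. C n ≤ M - δ
    have hsub : {ω | S n ω ≤ C n} ⊆ A := by
      intro ω hω
      simp only [Set.mem_setOf_eq] at hω
      simp only [hAdef, Set.mem_setOf_eq, Real.dist_eq]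
      have : S n ω - M ≤ -δ := by linarith
      have h2 : δ ≤ -(S n ω - M) := by linarith
      calc δ ≤ -(S n ω - M) := h2
        _ ≤ |S n ω - M| := neg_le_abs _
    have h1 : (μ {ω | S n ω ≤ C n}).toReal ≤ (μ A).toReal :=
      ENNReal.toReal_mono (measure_ne_top μ _) (measure_mono hsub)
    rw [hεn] at h1
    have : η ≤ ε := min_le_left _ _
    linarith
end

section
/- (Theorem 2) For any fixed SNR > 0 and any ε ∈ (0, 1/2), the H-ARQ rate converges to the ergodic capacity as the maximum number of rounds grows: lim_{M→∞} C_ε^{IR,M}(SNR) = μ(SNR). -/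
open MeasureTheory ProbabilityTheory Real Filter Topology

/-- Number of IR H-ARQ rounds: `X(R, SNR) = min(M, min{m ≥ 1 : Σ_{i=1}^m log₂(1+SNR·Hᵢ) > R})`
(realized as the infimum of `{M} ∪ {m ≥ 1 : accumulated mutual information exceeds R}`). -/
noncomputable def numRounds {Ω : Type*} (H : ℕ → Ω → ℝ) (M : ℕ) (snr R : ℝ) (ω : Ω) : ℕ :=
  sInf ({M} ∪ {m | 1 ≤ m ∧ R < ∑ i ∈ Finset.range m, Real.logb 2 (1 + snr * H i ω)})

section AuxLemmas
open Set

lemma expMeasure_Iio_zero : expMeasure 1 (Set.Iio 0) = 0 := by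
  rw [expMeasure, gammaMeasure, withDensity_apply _ measurableSet_Iio]
  exact lintegral_gammaPDF_of_nonpos le_rfl

lemma expMeasure_ae_nonneg : ∀ᵐ x ∂(expMeasure 1), 0 ≤ x := by
  rw [ae_iff]
  have : {x : ℝ | ¬ 0 ≤ x} = Set.Iio 0 := by ext x; simp [not_le]
  rw [this]; exact expMeasure_Iio_zero

lemma integrable_sq_add_one_exp : Integrable (fun x : ℝ => x ^ 2 + 1) (expMeasure 1) := by
  rw [expMeasure, gammaMeasure,
    integrable_withDensity_iff (f := gammaPDF 1 1) ((measurable_gammaPDFReal 1 1).ennreal_ofReal)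
      (ae_of_all _ fun x => ENNReal.ofReal_lt_top)]
  have heq : (fun x : ℝ => (x ^ 2 + 1) * (gammaPDF 1 1 x).toReal) =
      (Set.Ici (0:ℝ)).indicator (fun x => Real.exp (-x) * x ^ 2 + Real.exp (-x)) := by
    funext x
    rw [gammaPDF, ENNReal.toReal_ofReal (gammaPDFReal_nonneg zero_lt_one zero_lt_one x),
      gammaPDFReal]
    by_cases hx : 0 ≤ x
    · rw [if_pos hx, Set.indicator_of_mem (Set.mem_Ici.mpr hx)]
      simp [Real.Gamma_one, Real.rpow_zero]
      ring
    · rw [if_neg hx, Set.indicator_of_notMem (by simpa using hx), mul_zero]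
  rw [heq, integrable_indicator_iff measurableSet_Ici]
  rw [integrableOn_Ici_iff_integrableOn_Ioi]
  apply Integrable.add
  · have h3 := Real.GammaIntegral_convergent (by norm_num : (0:ℝ) < 3)
    have h2 : ∀ x : ℝ, x ^ ((3:ℝ) - 1) = x ^ 2 := by
      intro x; rw [show (3:ℝ) - 1 = ((2:ℕ):ℝ) by norm_num, Real.rpow_natCast]
    simpa [h2, IntegrableOn] using h3
  · have := exp_neg_integrableOn_Ioi (0:ℝ) (one_pos)
    simpa [IntegrableOn] using this

lemma integrable_gexp (g : ℝ → ℝ) (K : ℝ) (hg : Measurable g)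
    (hbound : ∀ x : ℝ, 0 ≤ x → |g x| ≤ K * (x ^ 2 + 1)) : Integrable g (expMeasure 1) := by
  refine (integrable_sq_add_one_exp.const_mul K).mono' (hg.aestronglyMeasurable) ?_
  filter_upwards [expMeasure_ae_nonneg] with x hx
  simpa [Real.norm_eq_abs] using hbound x hx

section F
variable (snr : ℝ)

noncomputable def fF (snr : ℝ) : ℝ → ℝ := fun x => Real.logb 2 (1 + snr * x)

lemma fF_meas : Measurable (fF snr) :=
  (Real.measurable_log.comp (measurable_const.add (measurable_id.const_mul snr))).div_const _

lemma fF_nonneg (hsnr : 0 < snr) {x : ℝ} (hx : 0 ≤ x) : 0 ≤ fF snr x :=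
  Real.logb_nonneg one_lt_two (by nlinarith)

lemma fF_le (hsnr : 0 < snr) {x : ℝ} (hx : 0 ≤ x) : fF snr x ≤ (snr / Real.log 2) * x := by
  have h1 : (0:ℝ) < 1 + snr * x := by nlinarith
  have h2 : Real.log (1 + snr * x) ≤ snr * x := by
    have := Real.log_le_sub_one_of_pos h1; linarith
  have hl : (0:ℝ) < Real.log 2 := Real.log_pos one_lt_two
  rw [fF, Real.logb, div_mul_eq_mul_div]
  gcongr

lemma integrable_fF (hsnr : 0 < snr) : Integrable (fF snr) (expMeasure 1) := by
  apply integrable_gexp _ (snr / Real.log 2 + 1) (fF_meas snr)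
  intro x hx
  have hK : 0 ≤ snr / Real.log 2 := div_nonneg hsnr.le (Real.log_pos one_lt_two).le
  have h1 := fF_nonneg snr hsnr hx
  have h2 := fF_le snr hsnr hx
  rw [abs_of_nonneg h1]
  nlinarith [sq_nonneg x, sq_nonneg (x-1)]

lemma integrable_fF_sq (hsnr : 0 < snr) : Integrable (fun x => fF snr x ^ 2) (expMeasure 1) := by
  apply integrable_gexp _ ((snr / Real.log 2) ^ 2 + 1) ((fF_meas snr).pow_const 2)
  intro x hx
  have hK : 0 ≤ snr / Real.log 2 := div_nonneg hsnr.le (Real.log_pos one_lt_two).le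
  have h1 := fF_nonneg snr hsnr hx
  have h2 := fF_le snr hsnr hx
  rw [abs_of_nonneg (by positivity)]
  nlinarith [sq_nonneg x, sq_nonneg (x^2-1)]

lemma memLp_fF (hsnr : 0 < snr) : MemLp (fF snr) 2 (expMeasure 1) := by
  rw [memLp_two_iff_integrable_sq (fF_meas snr).aestronglyMeasurable]
  exact integrable_fF_sq snr hsnr
end F

section NR
variable {Ω : Type*} {H : ℕ → Ω → ℝ} {M : ℕ} {snr R : ℝ} {ω : Ω}

lemma numRounds_le_M : numRounds H M snr R ω ≤ M :=
  Nat.sInf_le (Or.inl rfl)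

lemma one_le_numRounds (hM : 1 ≤ M) : 1 ≤ numRounds H M snr R ω := by
  refine le_csInf ⟨M, Or.inl rfl⟩ ?_
  rintro b (rfl | ⟨hb1, -⟩)
  · exact hM
  · exact hb1

lemma le_numRounds {k : ℕ} (hk : k + 1 ≤ M)
    (h : ∀ mm, mm ≤ k → ∑ i ∈ Finset.range mm, Real.logb 2 (1 + snr * H i ω) ≤ R) :
    k + 1 ≤ numRounds H M snr R ω := by
  refine le_csInf ⟨M, Or.inl rfl⟩ ?_
  rintro b (rfl | ⟨hb1, hb2⟩)
  · exact hk
  · by_contra hlt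
    push_neg at hlt
    exact absurd hb2 (not_lt.mpr (h b (by omega)))

lemma numRounds_le_iff {n : ℕ} : numRounds H M snr R ω ≤ n ↔
    (M ≤ n ∨ ∃ mm, 1 ≤ mm ∧ mm ≤ n ∧
      R < ∑ i ∈ Finset.range mm, Real.logb 2 (1 + snr * H i ω)) := by
  constructor
  · intro h
    have hne : ({M} ∪ {m | 1 ≤ m ∧ R < ∑ i ∈ Finset.range m,
        Real.logb 2 (1 + snr * H i ω)}).Nonempty := ⟨M, Or.inl rfl⟩
    have hmem : numRounds H M snr R ω ∈ _ := Nat.sInf_mem hne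
    rcases hmem with h1 | ⟨h1, h2⟩
    · exact Or.inl ((Set.mem_singleton_iff.mp h1) ▸ h)
    · exact Or.inr ⟨_, h1, h, h2⟩
  · rintro (hM | ⟨mm, h1, h2, h3⟩)
    · exact le_trans numRounds_le_M hM
    · exact le_trans (Nat.sInf_le (Or.inr ⟨h1, h3⟩)) h2

lemma measurable_numRounds [MeasurableSpace Ω] (hmeas : ∀ i, Measurable (H i)) :
    Measurable (fun ω => numRounds H M snr R ω) := by
  have hle : ∀ nn : ℕ, MeasurableSet {ω : Ω | numRounds H M snr R ω ≤ nn} := by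
    intro nn
    have heq : {ω : Ω | numRounds H M snr R ω ≤ nn} = {ω : Ω | M ≤ nn} ∪
        ⋃ mm ∈ Finset.Icc 1 nn, {ω : Ω | R < ∑ i ∈ Finset.range mm,
          Real.logb 2 (1 + snr * H i ω)} := by
      ext ω
      simp only [Set.mem_setOf_eq, Set.mem_union, Set.mem_iUnion, Finset.mem_Icc,
        numRounds_le_iff, exists_prop]
      tauto
    rw [heq]
    refine MeasurableSet.union (MeasurableSet.const _) ?_
    refine MeasurableSet.biUnion (Finset.Icc 1 nn).countable_toSet (fun mm _ => ?_)
    exact measurableSet_lt measurable_const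
      (Finset.measurable_sum _ (fun i _ =>
        ((Real.measurable_log.comp (measurable_const.add ((hmeas i).const_mul snr))).div_const _)))
  apply measurable_to_countable'
  intro n
  match n with
  | 0 =>
    have : (fun ω => numRounds H M snr R ω) ⁻¹' {0} =
        {ω : Ω | numRounds H M snr R ω ≤ 0} := by
      ext ω; simp [Nat.le_zero]
    rw [this]; exact hle 0
  | (k+1) =>
    have : (fun ω => numRounds H M snr R ω) ⁻¹' {k+1} =
        {ω : Ω | numRounds H M snr R ω ≤ k+1} \ {ω : Ω | numRounds H M snr R ω ≤ k} := by
      ext ω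
      simp only [Set.mem_preimage, Set.mem_singleton_iff, Set.mem_diff, Set.mem_setOf_eq]
      omega
    rw [this]; exact (hle (k+1)).diff (hle k)
end NR

end AuxLemmas

set_option maxHeartbeats 1000000 in
/-- Theorem 2: for fixed `SNR > 0` and `ε ∈ (0, 1/2)`, the H-ARQ rate
`C_ε^{IR,M}(SNR) = M·C_ε^M(SNR) / E[X(M·C_ε^M(SNR), SNR)]` converges to the ergodic capacity
`μ(SNR)` as `M → ∞`. -/
theorem harq_rate_tendsto_ergodic
    {Ω : Type*} [MeasurableSpace Ω] (μ : Measure Ω) [IsProbabilityMeasure μ]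
    (H : ℕ → Ω → ℝ) (hmeas : ∀ i, Measurable (H i))
    (hindep : iIndepFun H μ)
    (hdist : ∀ i, Measure.map (H i) μ = expMeasure 1)
    (snr : ℝ) (hsnr : 0 < snr) (ε : ℝ) (hε : ε ∈ Set.Ioo (0:ℝ) (1/2))
    (C : ℕ → ℝ)
    (hC : ∀ M, 1 ≤ M → 0 < C M ∧
      (μ {ω | (1 / (M:ℝ)) * ∑ i ∈ Finset.range M,
          Real.logb 2 (1 + snr * H i ω) ≤ C M}).toReal = ε) :
    Tendsto
      (fun M : ℕ =>
        ((M : ℝ) * C M) / ∫ ω, (numRounds H M snr ((M : ℝ) * C M) ω : ℝ) ∂μ)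
      atTop (𝓝 (∫ ω, Real.logb 2 (1 + snr * H 0 ω) ∂μ)) := by
  classical
  set Y : ℕ → Ω → ℝ := fun i ω => Real.logb 2 (1 + snr * H i ω) with hY
  have hYf : ∀ i, Y i = fF snr ∘ H i := fun i => rfl
  have hYmeas : ∀ i, Measurable (Y i) := fun i => (fF_meas snr).comp (hmeas i)
  have hmap : ∀ i, Measure.map (Y i) μ = Measure.map (fF snr) (expMeasure 1) := by
    intro i
    rw [hYf i, ← Measure.map_map (fF_meas snr) (hmeas i), hdist i]
  have hYm : ∀ i, MemLp (Y i) 2 μ := by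
    intro i
    rw [hYf i, ← memLp_map_measure_iff ((fF_meas snr).aestronglyMeasurable) (hmeas i).aemeasurable,
      hdist i]
    exact memLp_fF snr hsnr
  set m : ℝ := ∫ x, fF snr x ∂(expMeasure 1) with hm
  set v : ℝ := (∫ x, fF snr x ^ 2 ∂(expMeasure 1)) - m ^ 2 with hv
  have hEY : ∀ i, ∫ ω, Y i ω ∂μ = m := by
    intro i
    have h1 : ∫ ω, (fF snr) (H i ω) ∂μ = ∫ x, fF snr x ∂(expMeasure 1) := by
      rw [← hdist i, integral_map (hmeas i).aemeasurable
        (by rw [hdist i]; exact (fF_meas snr).aestronglyMeasurable)]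
    exact h1
  have hEY2 : ∀ i, ∫ ω, Y i ω ^ 2 ∂μ = ∫ x, fF snr x ^ 2 ∂(expMeasure 1) := by
    intro i
    have h1 : ∫ ω, (fF snr) (H i ω) ^ 2 ∂μ = ∫ x, fF snr x ^ 2 ∂(expMeasure 1) := by
      rw [← hdist i, integral_map (f := fun x => fF snr x ^ 2) (hmeas i).aemeasurable
        (by rw [hdist i]; exact ((fF_meas snr).pow_const 2).aestronglyMeasurable)]
    exact h1
  have hVY : ∀ i, variance (Y i) μ = v := by
    intro i
    rw [variance_eq_sub (hYm i), hv, ← hEY i, ← hEY2 i]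
    rfl
  have hv0 : 0 ≤ v := by rw [← hVY 0]; exact variance_nonneg _ _
  have hnn : ∀ᵐ ω ∂μ, ∀ i, 0 ≤ H i ω := by
    rw [ae_all_iff]
    intro i
    have : μ (H i ⁻¹' (Set.Iio 0)) = 0 := by
      rw [← Measure.map_apply (hmeas i) measurableSet_Iio, hdist i]
      exact expMeasure_Iio_zero
    rw [ae_iff]
    convert this using 2
    ext ω; simp [not_le]
  set S : ℕ → Ω → ℝ := fun n ω => ∑ i ∈ Finset.range n, Y i ω with hS
  have hSfun : ∀ n, S n = ∑ i ∈ Finset.range n, Y i := by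
    intro n; funext ω; simp [hS, Finset.sum_apply]
  have hSmeas : ∀ n, Measurable (S n) := fun n =>
    Finset.measurable_sum _ (fun i _ => hYmeas i)
  have hSm : ∀ n, MemLp (S n) 2 μ := by
    intro n; rw [hSfun n]; exact memLp_finset_sum' _ (fun i _ => hYm i)
  have hES : ∀ n, ∫ ω, S n ω ∂μ = n * m := by
    intro n
    rw [hS]
    rw [integral_finset_sum _ (fun i _ => (hYm i).integrable one_le_two)]
    simp [hEY, Finset.sum_const, Finset.card_range, nsmul_eq_mul]
  have hYindep : iIndepFun Y μ :=
    hindep.comp (fun _ => fF snr) (fun _ => fF_meas snr)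
  have hVS : ∀ n, variance (S n) μ = n * v := by
    intro n
    rw [hSfun n, IndepFun.variance_sum (fun i _ => hYm i)
      (fun i _ j _ hij => hYindep.indepFun hij)]
    simp [hVY, Finset.sum_const, Finset.card_range, nsmul_eq_mul]
  have cheb : ∀ (n : ℕ) (c : ℝ), 0 < c →
      (μ {ω | c ≤ |S n ω - n * m|}).toReal ≤ n * v / c ^ 2 := by
    intro n c hc
    have h1 := meas_ge_le_variance_div_sq (μ := μ) (X := S n) (hSm n) hc
    rw [hES n] at h1
    rw [hVS n] at h1
    calc (μ {ω | c ≤ |S n ω - n * m|}).toReal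
        ≤ (ENNReal.ofReal (n * v / c ^ 2)).toReal := ENNReal.toReal_mono (by simp) h1
      _ ≤ n * v / c ^ 2 := by
          rw [ENNReal.toReal_ofReal (by positivity)]
  obtain ⟨hε0, hε2⟩ := hε
  have hcompl : ∀ A : Set Ω, MeasurableSet A → (μ Aᶜ).toReal = 1 - (μ A).toReal := by
    intro A hA
    rw [prob_compl_eq_one_sub hA, ENNReal.toReal_sub_of_le prob_le_one ENNReal.one_ne_top]
    simp
  have hsetM : ∀ M : ℕ, MeasurableSet {ω | S M ω ≤ (M:ℝ) * C M} :=
    fun M => measurableSet_le (hSmeas M) measurable_const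
  have hεS : ∀ M : ℕ, 1 ≤ M → (μ {ω | S M ω ≤ (M:ℝ) * C M}).toReal = ε := by
    intro M hM
    rw [← (hC M hM).2]
    have hM0 : (0:ℝ) < M := by exact_mod_cast hM
    congr 2
    ext ω
    simp only [Set.mem_setOf_eq, hS]
    rw [one_div, inv_mul_le_iff₀ hM0]
  have hClo : ∀ δ : ℝ, 0 < δ → ∀ᶠ M : ℕ in atTop, m - δ < C M := by
    intro δ hδ
    rw [eventually_atTop]
    refine ⟨Nat.ceil (v / (ε * δ ^ 2)) + 1, fun M hM => ?_⟩
    have hM1 : 1 ≤ M := le_trans (Nat.le_add_left 1 _) hM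
    have hM0 : (0:ℝ) < M := by exact_mod_cast hM1
    have hMb : v / (ε * δ ^ 2) < (M:ℝ) := by
      calc v / (ε * δ ^ 2) ≤ (Nat.ceil (v / (ε * δ ^ 2)) : ℝ) := Nat.le_ceil _
        _ < M := by exact_mod_cast Nat.lt_of_lt_of_le (Nat.lt_succ_self _) hM
    by_contra hcon
    push_neg at hcon
    have hsub : {ω | S M ω ≤ (M:ℝ) * C M} ⊆ {ω | δ * M ≤ |S M ω - M * m|} := by
      intro ω hω
      simp only [Set.mem_setOf_eq] at hω ⊢
      have h1 : S M ω ≤ (M:ℝ) * (m - δ) := le_trans hω (by nlinarith)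
      rw [abs_sub_comm, le_abs]
      left; nlinarith
    have h2 : ε ≤ (μ {ω | δ * M ≤ |S M ω - M * m|}).toReal := by
      rw [← hεS M hM1]
      exact ENNReal.toReal_mono (measure_ne_top μ _) (measure_mono hsub)
    have h3 := cheb M (δ * M) (by positivity)
    have h4 : (M:ℝ) * v / (δ * M) ^ 2 = v / (δ ^ 2 * M) := by
      field_simp
    rw [h4] at h3
    have h5 : v / (δ ^ 2 * M) < ε := by
      rw [div_lt_iff₀ (by positivity)]
      have := (div_lt_iff₀ (by positivity : (0:ℝ) < ε * δ ^ 2)).mp hMb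
      nlinarith
    linarith
  have hChi : ∀ δ : ℝ, 0 < δ → ∀ᶠ M : ℕ in atTop, C M < m + δ := by
    intro δ hδ
    rw [eventually_atTop]
    refine ⟨Nat.ceil (v / ((1/4) * δ ^ 2)) + 1, fun M hM => ?_⟩
    have hM1 : 1 ≤ M := le_trans (Nat.le_add_left 1 _) hM
    have hM0 : (0:ℝ) < M := by exact_mod_cast hM1
    have hMb : v / ((1/4) * δ ^ 2) < (M:ℝ) := by
      calc v / ((1/4) * δ ^ 2) ≤ (Nat.ceil (v / ((1/4) * δ ^ 2)) : ℝ) := Nat.le_ceil _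
        _ < M := by exact_mod_cast Nat.lt_of_lt_of_le (Nat.lt_succ_self _) hM
    by_contra hcon
    push_neg at hcon
    have hsub : {ω | S M ω ≤ (M:ℝ) * C M}ᶜ ⊆ {ω | δ * M ≤ |S M ω - M * m|} := by
      intro ω hω
      simp only [Set.mem_compl_iff, Set.mem_setOf_eq, not_le] at hω
      simp only [Set.mem_setOf_eq]
      have h1 : (M:ℝ) * (m + δ) ≤ (M:ℝ) * C M := by nlinarith
      rw [le_abs]
      left; nlinarith
    have h2 : 1 - ε ≤ (μ {ω | δ * M ≤ |S M ω - M * m|}).toReal := by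
      rw [← hεS M hM1, ← hcompl _ (hsetM M)]
      exact ENNReal.toReal_mono (measure_ne_top μ _) (measure_mono hsub)
    have h3 := cheb M (δ * M) (by positivity)
    have h4 : (M:ℝ) * v / (δ * M) ^ 2 = v / (δ ^ 2 * M) := by
      field_simp
    rw [h4] at h3
    have h5 : v / (δ ^ 2 * M) < 1/2 := by
      rw [div_lt_iff₀ (by positivity)]
      have := (div_lt_iff₀ (by positivity : (0:ℝ) < (1/4) * δ ^ 2)).mp hMb
      nlinarith
    linarith
  have hCtend : Tendsto C atTop (𝓝 m) := by
    rw [Metric.tendsto_atTop]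
    intro δ hδ
    have h1 := hClo δ hδ
    have h2 := hChi δ hδ
    rw [eventually_atTop] at h1 h2
    obtain ⟨N1, hN1⟩ := h1
    obtain ⟨N2, hN2⟩ := h2
    refine ⟨max N1 N2, fun M hM => ?_⟩
    have := hN1 M (le_trans (le_max_left _ _) hM)
    have := hN2 M (le_trans (le_max_right _ _) hM)
    rw [Real.dist_eq, abs_lt]
    constructor <;> linarith
  have hYnn : ∀ᵐ ω ∂μ, ∀ i, 0 ≤ Y i ω := by
    filter_upwards [hnn] with ω hω i
    exact fF_nonneg snr hsnr (hω i)
  -- the ergodic capacity is positive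
  have hm0 : 0 < m := by
    have hC1 := (hC 1 le_rfl).1
    have hAc : (μ {ω | S 1 ω ≤ ((1:ℕ):ℝ) * C 1}ᶜ).toReal = 1 - ε := by
      rw [hcompl _ (hsetM 1), hεS 1 le_rfl]
    have hint : ∫ ω, Set.indicator ({ω | S 1 ω ≤ ((1:ℕ):ℝ) * C 1}ᶜ) (fun _ => C 1) ω ∂μ
        ≤ ∫ ω, Y 0 ω ∂μ := by
      apply integral_mono_ae ((integrable_const (C 1)).indicator (hsetM 1).compl)
        ((hYm 0).integrable one_le_two)
      filter_upwards [hYnn] with ω hω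
      by_cases hmem : ω ∈ {ω | S 1 ω ≤ ((1:ℕ):ℝ) * C 1}ᶜ
      · rw [Set.indicator_of_mem hmem]
        have h1 : ¬ (S 1 ω ≤ ((1:ℕ):ℝ) * C 1) := hmem
        push_neg at h1
        have hS1 : S 1 ω = Y 0 ω := by simp [hS]
        rw [hS1] at h1
        push_cast at h1
        linarith
      · rw [Set.indicator_of_notMem hmem]; exact hω 0
    have hval : ∫ ω, Set.indicator ({ω | S 1 ω ≤ ((1:ℕ):ℝ) * C 1}ᶜ) (fun _ => C 1) ω ∂μ
        = (1 - ε) * C 1 := by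
      rw [integral_indicator_const _ (hsetM 1).compl, measureReal_def, hAc, smul_eq_mul]
    rw [hval, hEY 0] at hint
    nlinarith
  -- measurability and integrability of the number of rounds
  have hXmeasR : ∀ M : ℕ, Measurable (fun ω => (numRounds H M snr ((M:ℝ) * C M) ω : ℝ)) :=
    fun M => measurable_from_nat.comp (measurable_numRounds hmeas)
  have hXint : ∀ M : ℕ, Integrable (fun ω => (numRounds H M snr ((M:ℝ) * C M) ω : ℝ)) μ := by
    intro M
    refine (integrable_const ((M:ℝ))).mono' (hXmeasR M).aestronglyMeasurable ?_
    refine ae_of_all _ fun ω => ?_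
    rw [Real.norm_eq_abs, abs_of_nonneg (Nat.cast_nonneg _)]
    exact Nat.cast_le.mpr numRounds_le_M
  set I : ℕ → ℝ := fun M => ∫ ω, (numRounds H M snr ((M:ℝ) * C M) ω : ℝ) ∂μ with hI
  have hIleM : ∀ M : ℕ, I M ≤ M := by
    intro M
    have h1 : I M ≤ ∫ _ω, (M:ℝ) ∂μ := integral_mono (hXint M) (integrable_const _)
      (fun ω => Nat.cast_le.mpr numRounds_le_M)
    simpa using h1
  have hIge1 : ∀ M : ℕ, 1 ≤ M → 1 ≤ I M := by
    intro M hM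
    have h1 : ∫ _ω, (1:ℝ) ∂μ ≤ I M := integral_mono (integrable_const _) (hXint M)
      (fun ω => Nat.one_le_cast.mpr (one_le_numRounds hM))
    simpa using h1
  -- the key lower bound on the expected number of rounds
  have hIlow : ∀ M k : ℕ, k + 1 ≤ M → ∀ c : ℝ, 0 < c → (k:ℝ) * m + c ≤ (M:ℝ) * C M →
      ((k:ℝ)+1) * (1 - k * v / c ^ 2) ≤ I M := by
    intro M k hk c hc hgap
    have hmsble : MeasurableSet {ω | S k ω ≤ (M:ℝ) * C M} :=
      measurableSet_le (hSmeas k) measurable_const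
    have hsub : {ω | S k ω ≤ (M:ℝ) * C M}ᶜ ⊆ {ω | c ≤ |S k ω - k * m|} := by
      intro ω hω
      simp only [Set.mem_compl_iff, Set.mem_setOf_eq, not_le] at hω ⊢
      rw [le_abs]; left; linarith
    have hprob : 1 - (k:ℝ) * v / c ^ 2 ≤ (μ {ω | S k ω ≤ (M:ℝ) * C M}).toReal := by
      have h1 : (μ {ω | S k ω ≤ (M:ℝ) * C M}ᶜ).toReal ≤ k * v / c ^ 2 :=
        le_trans (ENNReal.toReal_mono (measure_ne_top μ _) (measure_mono hsub)) (cheb k c hc)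
      rw [hcompl _ hmsble] at h1
      linarith
    have hpt : ∀ᵐ ω ∂μ, Set.indicator {ω | S k ω ≤ (M:ℝ) * C M} (fun _ => (k:ℝ)+1) ω
        ≤ (numRounds H M snr ((M:ℝ) * C M) ω : ℝ) := by
      filter_upwards [hYnn] with ω hω
      by_cases hmem : ω ∈ {ω | S k ω ≤ (M:ℝ) * C M}
      · rw [Set.indicator_of_mem hmem]
        have hle : k + 1 ≤ numRounds H M snr ((M:ℝ) * C M) ω := by
          apply le_numRounds hk
          intro mm hmm
          have hmono : S mm ω ≤ S k ω := by
            apply Finset.sum_le_sum_of_subset_of_nonneg (Finset.range_subset_range.mpr hmm)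
            intro i _ _; exact hω i
          exact le_trans hmono hmem
        exact_mod_cast hle
      · rw [Set.indicator_of_notMem hmem]; positivity
    have hlow2 : ((k:ℝ)+1) * (μ {ω | S k ω ≤ (M:ℝ) * C M}).toReal ≤ I M := by
      have h2 := integral_mono_ae ((integrable_const ((k:ℝ)+1)).indicator hmsble)
        (hXint M) hpt
      rwa [integral_indicator_const _ hmsble, smul_eq_mul, mul_comm] at h2
    calc ((k:ℝ)+1) * (1 - k * v / c ^ 2)
        ≤ ((k:ℝ)+1) * (μ {ω | S k ω ≤ (M:ℝ) * C M}).toReal :=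
          mul_le_mul_of_nonneg_left hprob (by positivity)
      _ ≤ I M := hlow2
  -- E[X]/M → 1
  have hIM1 : Tendsto (fun M : ℕ => I M / M) atTop (𝓝 1) := by
    rw [Metric.tendsto_atTop]
    intro ε' hε'
    set δ : ℝ := min (ε'/4) (1/2) with hδdef
    have hδ0 : 0 < δ := lt_min (by linarith) (by norm_num)
    have hδhalf : δ ≤ 1/2 := min_le_right _ _
    have hδε : δ ≤ ε'/4 := min_le_left _ _
    have hδ₀ : 0 < δ * m / 2 := by positivity
    have hev1 := hClo (δ*m/2) hδ₀
    rw [eventually_atTop] at hev1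
    obtain ⟨N1, hN1⟩ := hev1
    refine ⟨max N1 (Nat.ceil (max (2/(1-δ)) ((4*v)/(δ^3*m^2))) + 1), fun M hM => ?_⟩
    have hMN1 := hN1 M (le_trans (le_max_left _ _) hM)
    have hMa : max (2/(1-δ)) ((4*v)/(δ^3*m^2)) < (M:ℝ) := by
      calc max (2/(1-δ)) ((4*v)/(δ^3*m^2))
          ≤ (Nat.ceil (max (2/(1-δ)) ((4*v)/(δ^3*m^2))) : ℝ) := Nat.le_ceil _
        _ < M := by
            exact_mod_cast Nat.lt_of_lt_of_le (Nat.lt_succ_self _)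
              (le_trans (le_max_right _ _) hM)
    have hδ1 : δ < 1 := by linarith
    have h2M : 2/(1-δ) < M := lt_of_le_of_lt (le_max_left _ _) hMa
    have hvM : 4*v/(δ^3*m^2) < M := lt_of_le_of_lt (le_max_right _ _) hMa
    have hM0 : (0:ℝ) < M := by
      have hpos : (0:ℝ) < 1-δ := by linarith
      exact lt_trans (by positivity) h2M
    have hM1 : 1 ≤ M := by
      have := Nat.cast_pos.mp hM0; omega
    have h2M' : 2 < (M:ℝ) * (1-δ) := by
      have := (div_lt_iff₀ (by linarith : (0:ℝ) < 1-δ)).mp h2M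
      linarith
    set n : ℕ := Nat.ceil (δ * M) with hn
    have hn1 : 1 ≤ n := Nat.one_le_ceil_iff.mpr (by positivity)
    have hnle : (n:ℝ) ≤ δ*M + 1 := le_of_lt (Nat.ceil_lt_add_one (by positivity))
    have hnge : δ*M ≤ n := Nat.le_ceil _
    have hnM : n ≤ M := by
      have : (n:ℝ) ≤ M := by linarith
      exact_mod_cast this
    set k : ℕ := M - n with hk
    have hkM : k + 1 ≤ M := by omega
    have hkr : (k:ℝ) = M - n := by
      rw [hk]; exact Nat.cast_sub hnM
    set c : ℝ := δ * m * M / 2 with hc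
    have hc0 : 0 < c := by positivity
    have hgap : (k:ℝ)*m + c ≤ M * C M := by
      have h1 : (k:ℝ) ≤ M - δ*M := by rw [hkr]; linarith
      have h2 : m - δ*m/2 < C M := hMN1
      rw [hc]
      nlinarith
    have hkey := hIlow M k hkM c hc0 hgap
    have hkleM : (k:ℝ) ≤ M := by
      rw [hkr]; have : (0:ℝ) ≤ n := Nat.cast_nonneg n; linarith
    have hbound : (k:ℝ)*v/c^2 ≤ δ := by
      rw [hc, div_le_iff₀ (by positivity)]
      have h4 : 4*v < δ^3*m^2*M := by
        have := (div_lt_iff₀ (by positivity : (0:ℝ) < δ^3*m^2)).mp hvM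
        nlinarith
      nlinarith [hv0, mul_le_mul_of_nonneg_right hkleM hv0]
    have hk1 : (1-δ)*M ≤ (k:ℝ)+1 := by rw [hkr]; nlinarith
    have hfin : (1-δ)*(1-δ)*M ≤ I M := by
      have ha : (0:ℝ) ≤ 1-δ := by linarith
      have hb : (0:ℝ) ≤ (k:ℝ)+1 := by positivity
      calc (1-δ)*(1-δ)*M = ((1-δ)*M)*(1-δ) := by ring
        _ ≤ ((k:ℝ)+1)*(1-δ) := mul_le_mul_of_nonneg_right hk1 ha
        _ ≤ ((k:ℝ)+1)*(1 - k*v/c^2) := mul_le_mul_of_nonneg_left (by linarith) hb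
        _ ≤ I M := hkey
    have hup := hIleM M
    rw [Real.dist_eq, abs_lt]
    constructor
    · have hdiv : (1-δ)*(1-δ) ≤ I M / M := by
        rw [le_div_iff₀ hM0]; linarith
      nlinarith
    · have : I M / M ≤ 1 := by rw [div_le_one hM0]; exact hup
      linarith
  -- conclusion
  have hratio : Tendsto (fun M : ℕ => C M / (I M / M)) atTop (𝓝 (m / 1)) :=
    hCtend.div hIM1 one_ne_zero
  rw [div_one] at hratio
  show Tendsto (fun M : ℕ => ((M:ℝ) * C M) / I M) atTop
    (𝓝 (∫ ω, Real.logb 2 (1 + snr * H 0 ω) ∂μ))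
  have hgoalrw : ∫ ω, Real.logb 2 (1 + snr * H 0 ω) ∂μ = m := hEY 0
  rw [hgoalrw]
  refine hratio.congr' ?_
  filter_upwards [eventually_ge_atTop 1] with M hM
  rw [div_div_eq_mul_div, mul_comm]
end

section
/- For any fixed SNR > 0 and any ε ∈ (0, 1/2), with initial rate R_init = M·C_ε^M(SNR), the expected number of H-ARQ rounds is asymptotically full: lim_{M→∞} E[X(M·C_ε^M(SNR), SNR)] / M = 1. -/
open MeasureTheory ProbabilityTheory Real Filter Topology

section Aux


lemma expMeasure_Iic_zero : expMeasure 1 (Set.Iic 0) = 0 := by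
  rw [expMeasure, gammaMeasure, withDensity_apply _ measurableSet_Iic]
  rw [setLIntegral_congr (Iio_ae_eq_Iic (a := (0:ℝ))).symm]
  rw [setLIntegral_congr_fun measurableSet_Iio
    (fun x (hx : x < 0) => gammaPDF_of_neg hx), lintegral_zero]

lemma integrable_id_expMeasure : Integrable (id : ℝ → ℝ) (expMeasure 1) := by
  have hm : Measurable (gammaPDF 1 1) := (measurable_gammaPDFReal 1 1).ennreal_ofReal
  rw [expMeasure, gammaMeasure,
    integrable_withDensity_iff hm (ae_of_all _ fun x => ENNReal.ofReal_lt_top)]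
  have h1 : (fun x : ℝ => id x * (gammaPDF 1 1 x).toReal)
      = Set.indicator (Set.Ici 0) (fun x => x * Real.exp (-x)) := by
    funext x
    simp only [id, gammaPDF, ENNReal.toReal_ofReal (gammaPDFReal_nonneg one_pos one_pos x),
      gammaPDFReal, Set.indicator, Set.mem_Ici]
    split_ifs with h
    · simp [Real.Gamma_one]
      exact Or.inl (Real.exp_pos _).le
    · simp
  rw [h1, integrable_indicator_iff measurableSet_Ici,
    integrableOn_Ici_iff_integrableOn_Ioi]
  have := Real.GammaIntegral_convergent (s := 2) (by norm_num)
  refine this.congr_fun (fun x hx => ?_) measurableSet_Ioi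
  norm_num [mul_comm]


noncomputable def nr {Ω : Type*} (Y : ℕ → Ω → ℝ) (M : ℕ) (R : ℝ) (ω : Ω) : ℕ :=
  sInf ({M} ∪ {m | 1 ≤ m ∧ R < ∑ i ∈ Finset.range m, Y i ω})

section NR
variable {Ω : Type*} (Y : ℕ → Ω → ℝ) (M : ℕ) (R : ℝ) (ω : Ω)

lemma nr_le : nr Y M R ω ≤ M :=
  Nat.sInf_le (Set.mem_union_left _ rfl)

lemma le_nr {k : ℕ} (hk : k ≤ M)
    (h : ∀ m, 1 ≤ m → m < k → ¬ (R < ∑ i ∈ Finset.range m, Y i ω)) :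
    k ≤ nr Y M R ω := by
  refine le_csInf ⟨M, Set.mem_union_left _ rfl⟩ ?_
  rintro b (hb | ⟨hb1, hb2⟩)
  · exact le_trans hk (le_of_eq (Set.mem_singleton_iff.mp hb).symm)
  · by_contra hlt
    exact h b hb1 (not_le.mp hlt) hb2

lemma measurable_nr [MeasurableSpace Ω] (hmeas : ∀ i, Measurable (Y i)) :
    Measurable (fun ω => nr Y M R ω) := by
  have hE : ∀ j : ℕ, MeasurableSet {ω : Ω |
      j ∈ ({M} ∪ {m | 1 ≤ m ∧ R < ∑ i ∈ Finset.range m, Y i ω} : Set ℕ)} := by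
    intro j
    have : {ω : Ω | j ∈ ({M} ∪ {m | 1 ≤ m ∧ R < ∑ i ∈ Finset.range m, Y i ω} : Set ℕ)} =
        {ω : Ω | j = M} ∪ ({ω : Ω | 1 ≤ j} ∩ {ω : Ω | R < ∑ i ∈ Finset.range j, Y i ω}) := by
      ext ω; simp [Set.mem_union, Set.mem_setOf_eq]
    rw [this]
    have hsum : Measurable (fun ω => ∑ i ∈ Finset.range j, Y i ω) :=
      Finset.measurable_sum _ (fun i _ => hmeas i)
    exact (MeasurableSet.const _).union ((MeasurableSet.const _).inter
      (measurableSet_lt measurable_const hsum))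
  apply measurable_to_countable'
  intro k
  have : (fun ω => nr Y M R ω) ⁻¹' {k} =
      {ω : Ω | k ∈ ({M} ∪ {m | 1 ≤ m ∧ R < ∑ i ∈ Finset.range m, Y i ω} : Set ℕ)} ∩
      ⋂ j ∈ Finset.range k, ({ω : Ω | j ∈ ({M} ∪ {m | 1 ≤ m ∧ R < ∑ i ∈ Finset.range m,
        Y i ω} : Set ℕ)})ᶜ := by
    ext ω
    simp only [Set.mem_preimage, Set.mem_singleton_iff, Set.mem_inter_iff, Set.mem_iInter,
      Set.mem_compl_iff, Finset.mem_range, Set.mem_setOf_eq]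
    constructor
    · rintro rfl
      exact ⟨Nat.sInf_mem ⟨M, Set.mem_union_left _ rfl⟩, fun j hj => Nat.notMem_of_lt_sInf hj⟩
    · rintro ⟨hmem, hlt⟩
      refine le_antisymm (Nat.sInf_le hmem) ?_
      by_contra hc
      exact hlt _ (not_le.mp hc) (Nat.sInf_mem ⟨M, Set.mem_union_left _ rfl⟩)
  rw [this]
  exact (hE k).inter (MeasurableSet.biInter (Set.to_countable _) (fun j _ => (hE j).compl))
end NR

variable {Ω : Type*}

theorem aux_main [MeasurableSpace Ω] (μ : Measure Ω) [IsProbabilityMeasure μ]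
    (Y : ℕ → Ω → ℝ) (hYmeas : ∀ i, Measurable (Y i))
    (hYnn : ∀ᵐ ω ∂μ, ∀ i, 0 ≤ Y i ω)
    (c : ℝ) (hcpos : 0 < c)
    (hLLN : ∀ᵐ ω ∂μ, Tendsto (fun n : ℕ => (∑ i ∈ Finset.range n, Y i ω) / n) atTop (𝓝 c))
    (ε : ℝ) (hε0 : 0 < ε) (hε1 : ε < 1)
    (C : ℕ → ℝ)
    (hC : ∀ M : ℕ, 1 ≤ M →
      (μ {ω | (1 / (M:ℝ)) * ∑ i ∈ Finset.range M, Y i ω ≤ C M}).toReal = ε) :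
    Tendsto (fun M : ℕ => (∫ ω, (nr Y M ((M : ℝ) * C M) ω : ℝ) ∂μ) / (M : ℝ))
      atTop (𝓝 1) := by
  -- basic measurability
  have hSmeas : ∀ n : ℕ, Measurable (fun ω => ∑ i ∈ Finset.range n, Y i ω) :=
    fun n => Finset.measurable_sum _ (fun i _ => hYmeas i)
  have hAmeas : ∀ n : ℕ, Measurable (fun ω => (∑ i ∈ Finset.range n, Y i ω) / (n:ℝ)) :=
    fun n => (hSmeas n).div_const _
  have hTIM : TendstoInMeasure μ (fun n ω => (∑ i ∈ Finset.range n, Y i ω) / (n:ℝ)) atTop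
      (fun _ => c) :=
    tendstoInMeasure_of_tendsto_ae (fun n => (hAmeas n).aestronglyMeasurable) hLLN
  have hTIMd : ∀ η : ℝ, 0 < η → Tendsto (fun n : ℕ =>
      μ {ω | η ≤ dist ((∑ i ∈ Finset.range n, Y i ω) / (n:ℝ)) c}) atTop (𝓝 0) := by
    intro η hη
    have := hTIM (ENNReal.ofReal η) (ENNReal.ofReal_pos.mpr hη)
    refine this.congr fun n => ?_
    congr 1; ext ω; simp only [Set.mem_setOf_eq]
    rw [edist_dist, ENNReal.ofReal_le_ofReal_iff dist_nonneg]
  -- rewrite hC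
  have hC' : ∀ M : ℕ, 1 ≤ M →
      (μ {ω | (∑ i ∈ Finset.range M, Y i ω) / (M:ℝ) ≤ C M}).toReal = ε := by
    intro M hM
    have hseteq : {ω : Ω | (∑ i ∈ Finset.range M, Y i ω) / (M:ℝ) ≤ C M}
        = {ω : Ω | (1 / (M:ℝ)) * ∑ i ∈ Finset.range M, Y i ω ≤ C M} := by
      ext ω; rw [Set.mem_setOf_eq, Set.mem_setOf_eq, one_div_mul_eq_div]
    rw [hseteq]; exact hC M hM
  -- deviation probabilities
  have hlow : ∀ η : ℝ, 0 < η → Tendsto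
      (fun n : ℕ => μ {ω | (∑ i ∈ Finset.range n, Y i ω) / (n:ℝ) ≤ c - η}) atTop (𝓝 0) := by
    intro η hη
    refine tendsto_of_tendsto_of_tendsto_of_le_of_le tendsto_const_nhds (hTIMd η hη)
      (fun n => zero_le) (fun n => measure_mono ?_)
    intro ω hω
    simp only [Set.mem_setOf_eq] at hω ⊢
    rw [Real.dist_eq, abs_sub_comm]
    exact le_trans (by linarith) (le_abs_self _)
  have hupp : ∀ η : ℝ, 0 < η → Tendsto
      (fun n : ℕ => μ {ω | c + η < (∑ i ∈ Finset.range n, Y i ω) / (n:ℝ)}) atTop (𝓝 0) := by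
    intro η hη
    refine tendsto_of_tendsto_of_tendsto_of_le_of_le tendsto_const_nhds (hTIMd η hη)
      (fun n => zero_le) (fun n => measure_mono ?_)
    intro ω hω
    simp only [Set.mem_setOf_eq] at hω ⊢
    rw [Real.dist_eq]
    exact le_trans (by linarith) (le_abs_self _)
  -- convergence of the outage capacity
  have hCc : Tendsto C atTop (𝓝 c) := by
    rw [Metric.tendsto_nhds]
    intro η hη
    have h1 := (hlow η hη).eventually_lt_const (ENNReal.ofReal_pos.mpr hε0)
    have h2 := (hupp η hη).eventually_lt_const (ENNReal.ofReal_pos.mpr (by linarith : (0:ℝ) < 1 - ε))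
    filter_upwards [h1, h2, eventually_ge_atTop 1] with M hM1 hM2 hMge
    rw [Real.dist_eq, abs_lt]
    constructor
    · -- -η < C M - c
      by_contra h
      push_neg at h
      have hCle : C M ≤ c - η := by linarith
      have hsub : {ω : Ω | (∑ i ∈ Finset.range M, Y i ω) / (M:ℝ) ≤ C M}
          ⊆ {ω | (∑ i ∈ Finset.range M, Y i ω) / (M:ℝ) ≤ c - η} :=
        fun ω hω => le_trans hω hCle
      have hle : ε ≤ (μ {ω | (∑ i ∈ Finset.range M, Y i ω) / (M:ℝ) ≤ c - η}).toReal := by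
        rw [← hC' M hMge]
        exact ENNReal.toReal_mono (measure_ne_top _ _) (measure_mono hsub)
      have hlt : (μ {ω | (∑ i ∈ Finset.range M, Y i ω) / (M:ℝ) ≤ c - η}).toReal < ε := by
        have := ENNReal.toReal_lt_toReal (measure_ne_top μ _) ENNReal.ofReal_ne_top |>.mpr hM1
        rwa [ENNReal.toReal_ofReal hε0.le] at this
      linarith
    · -- C M - c < η
      by_contra h
      push_neg at h
      have hCge : c + η ≤ C M := by linarith
      have hsub : {ω : Ω | (∑ i ∈ Finset.range M, Y i ω) / (M:ℝ) ≤ c + η}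
          ⊆ {ω | (∑ i ∈ Finset.range M, Y i ω) / (M:ℝ) ≤ C M} :=
        fun ω hω => le_trans hω hCge
      have hcompl : {ω : Ω | c + η < (∑ i ∈ Finset.range M, Y i ω) / (M:ℝ)}
          = {ω : Ω | (∑ i ∈ Finset.range M, Y i ω) / (M:ℝ) ≤ c + η}ᶜ := by
        ext ω; simp [not_le]
      have htot : μ {ω : Ω | (∑ i ∈ Finset.range M, Y i ω) / (M:ℝ) ≤ c + η}
          + μ {ω : Ω | c + η < (∑ i ∈ Finset.range M, Y i ω) / (M:ℝ)} = 1 := by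
        rw [hcompl, measure_add_measure_compl (measurableSet_le (hAmeas M) measurable_const),
          measure_univ]
      have htotR : (μ {ω : Ω | (∑ i ∈ Finset.range M, Y i ω) / (M:ℝ) ≤ c + η}).toReal
          + (μ {ω : Ω | c + η < (∑ i ∈ Finset.range M, Y i ω) / (M:ℝ)}).toReal = 1 := by
        rw [← ENNReal.toReal_add (measure_ne_top _ _) (measure_ne_top _ _), htot]
        simp
      have hltR : (μ {ω : Ω | c + η < (∑ i ∈ Finset.range M, Y i ω) / (M:ℝ)}).toReal
          < 1 - ε := by
        have := ENNReal.toReal_lt_toReal (measure_ne_top μ _) ENNReal.ofReal_ne_top |>.mpr hM2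
        rwa [ENNReal.toReal_ofReal (by linarith : (0:ℝ) ≤ 1 - ε)] at this
      have hgt : ε < (μ {ω : Ω | (∑ i ∈ Finset.range M, Y i ω) / (M:ℝ) ≤ c + η}).toReal := by
        linarith
      have hle2 : (μ {ω : Ω | (∑ i ∈ Finset.range M, Y i ω) / (M:ℝ) ≤ c + η}).toReal
          ≤ (μ {ω : Ω | (∑ i ∈ Finset.range M, Y i ω) / (M:ℝ) ≤ C M}).toReal :=
        ENNReal.toReal_mono (measure_ne_top _ _) (measure_mono hsub)
      rw [hC' M hMge] at hle2
      linarith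
  -- integrability of the number of rounds
  have hXint : ∀ M : ℕ, Integrable (fun ω => (nr Y M ((M:ℝ) * C M) ω : ℝ)) μ := by
    intro M
    refine Integrable.mono' (integrable_const (M:ℝ))
      ((measurable_from_top.comp (measurable_nr Y M _ hYmeas)).aestronglyMeasurable)
      (ae_of_all _ fun ω => ?_)
    rw [Real.norm_eq_abs, abs_of_nonneg (by positivity)]
    exact_mod_cast nr_le Y M _ ω
  -- main limit
  rw [tendsto_order]
  constructor
  · -- lower bound
    intro a ha
    set β : ℝ := max ((1 + a) / 2) (1 / 2) with hβ
    have hβpos : (0:ℝ) < β := lt_of_lt_of_le (by norm_num) (le_max_right _ _)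
    have hβ1 : β < 1 := by
      rw [hβ]; apply max_lt (by linarith) (by norm_num)
    have hβa : a < β := by
      rcases lt_or_ge a (1/2) with h | h
      · exact lt_of_lt_of_le h (le_max_right _ _)
      · exact lt_of_lt_of_le (by linarith : a < (1+a)/2) (le_max_left _ _)
    set m : ℕ → ℕ := fun M => ⌊β * (M:ℝ)⌋₊ with hm
    have hmle : ∀ M : ℕ, m M ≤ M := by
      intro M
      have h1 : β * (M:ℝ) ≤ (M:ℝ) := mul_le_of_le_one_left (Nat.cast_nonneg M) hβ1.le
      calc m M ≤ ⌊(M:ℝ)⌋₊ := Nat.floor_mono h1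
        _ = M := Nat.floor_natCast M
    have hm_atTop : Tendsto m atTop atTop := by
      apply tendsto_nat_floor_atTop.comp
      exact (tendsto_natCast_atTop_atTop (R := ℝ)).const_mul_atTop hβpos
    have hmdiv : Tendsto (fun M : ℕ => (m M : ℝ) / M) atTop (𝓝 β) :=
      (tendsto_nat_floor_mul_div_atTop hβpos.le).comp tendsto_natCast_atTop_atTop
    set γ : ℝ := (c + c / β) / 2 with hγ
    have hcβ : c < c / β := by
      rw [lt_div_iff₀ hβpos]; nlinarith
    have hγc : c < γ := by rw [hγ]; linarith
    have hβγ : β * γ < c := by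
      have h1 : β * γ = (β * c + c) / 2 := by
        rw [hγ]; field_simp
      nlinarith
    have hη0 : (0:ℝ) < γ - c := by linarith
    have hp := (hTIMd (γ - c) hη0).comp hm_atTop
    set G : ℕ → Set Ω := fun M =>
      (⋂ i, {ω | 0 ≤ Y i ω}) ∩ {ω | ∑ i ∈ Finset.range (m M), Y i ω ≤ (M:ℝ) * C M} with hG
    have hGmeas : ∀ M, MeasurableSet (G M) := fun M =>
      (MeasurableSet.iInter (fun i => measurableSet_le measurable_const (hYmeas i))).inter
        (measurableSet_le (hSmeas (m M)) measurable_const)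
    have hpoint : ∀ M : ℕ, ∀ ω,
        (G M).indicator (fun _ => (m M : ℝ)) ω ≤ (nr Y M ((M:ℝ) * C M) ω : ℝ) := by
      intro M ω
      by_cases hω : ω ∈ G M
      · rw [Set.indicator_of_mem hω]
        have hk : m M ≤ nr Y M ((M:ℝ)*C M) ω := by
          refine le_nr Y M _ ω (hmle M) (fun mm h1 h2 => ?_)
          rw [not_lt]
          obtain ⟨hnn, hsum⟩ := hω
          simp only [Set.mem_iInter, Set.mem_setOf_eq] at hnn
          refine le_trans (Finset.sum_le_sum_of_subset_of_nonneg
            (Finset.range_subset_range.mpr h2.le) (fun i _ _ => hnn i)) hsum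
        exact_mod_cast hk
      · rw [Set.indicator_of_notMem hω]; positivity
    have hbound : ∀ M : ℕ, (μ (G M)).toReal * (m M : ℝ)
        ≤ ∫ ω, (nr Y M ((M:ℝ) * C M) ω : ℝ) ∂μ := by
      intro M
      have h1 := integral_mono ((integrable_const ((m M : ℝ))).indicator (hGmeas M)) (hXint M)
        (hpoint M)
      rw [integral_indicator_const _ (hGmeas M), smul_eq_mul] at h1
      change (μ (G M)).toReal * _ ≤ _ at h1
      linarith
    have hGcompl : ∀ᶠ M : ℕ in atTop, μ (G M)ᶜ ≤ μ {ω | γ - c ≤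
        dist ((∑ i ∈ Finset.range (m M), Y i ω) / (m M : ℝ)) c} := by
      filter_upwards [eventually_ge_atTop 1, hCc.eventually_const_lt hβγ,
        hm_atTop.eventually_ge_atTop 1] with M hM1 hMC hm1
      have hcompl : (G M)ᶜ = (⋂ i, {ω : Ω | 0 ≤ Y i ω})ᶜ ∪
          {ω : Ω | (M:ℝ) * C M < ∑ i ∈ Finset.range (m M), Y i ω} := by
        rw [hG, Set.compl_inter]
        congr 1
        ext ω; simp [not_le]
      rw [hcompl]
      refine le_trans (measure_union_le _ _) ?_
      have hz : μ ((⋂ i, {ω : Ω | 0 ≤ Y i ω})ᶜ) = 0 := by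
        have he : (⋂ i, {ω : Ω | 0 ≤ Y i ω})ᶜ = {ω : Ω | ¬ ∀ i, 0 ≤ Y i ω} := by
          ext ω; simp
        rw [he]
        exact ae_iff.mp hYnn
      rw [hz, zero_add]
      refine measure_mono (fun ω hω => ?_)
      simp only [Set.mem_setOf_eq] at hω ⊢
      have hMpos : (0:ℝ) < M := by exact_mod_cast hM1
      have hmpos : (0:ℝ) < (m M : ℝ) := by exact_mod_cast hm1
      have hfl : (m M : ℝ) ≤ β * M := Nat.floor_le (by positivity)
      have hMR : (m M : ℝ) * γ ≤ (M:ℝ) * C M := by nlinarith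
      have hgt : γ < (∑ i ∈ Finset.range (m M), Y i ω) / (m M : ℝ) := by
        rw [lt_div_iff₀ hmpos]
        nlinarith
      rw [Real.dist_eq]
      exact le_trans (by linarith) (le_abs_self _)
    have hbad : Tendsto (fun M => μ (G M)ᶜ) atTop (𝓝 0) :=
      tendsto_of_tendsto_of_tendsto_of_le_of_le' tendsto_const_nhds hp
        (Eventually.of_forall fun M => zero_le) hGcompl
    have hGone : Tendsto (fun M => (μ (G M)).toReal) atTop (𝓝 1) := by
      have h2 : Tendsto (fun M => (μ (G M)ᶜ).toReal) atTop (𝓝 0) := by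
        have h5 := (ENNReal.tendsto_toReal (by simp)).comp hbad
        exact h5
      have h3 : ∀ M, (μ (G M)).toReal = 1 - (μ (G M)ᶜ).toReal := by
        intro M
        have h6 := measure_add_measure_compl (μ := μ) (hGmeas M)
        rw [measure_univ] at h6
        have h4 := congrArg ENNReal.toReal h6
        rw [ENNReal.toReal_add (measure_ne_top _ _) (measure_ne_top _ _), ENNReal.toReal_one] at h4
        linarith
      simp_rw [h3]
      simpa using tendsto_const_nhds.sub h2
    have hglim : Tendsto (fun M : ℕ => (μ (G M)).toReal * ((m M : ℝ) / M)) atTop (𝓝 β) := by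
      have h7 := hGone.mul hmdiv
      simpa using h7
    filter_upwards [hglim.eventually_const_lt hβa, eventually_ge_atTop 1] with M hMg hM1
    have hMpos : (0:ℝ) < M := by exact_mod_cast hM1
    refine lt_of_lt_of_le hMg ?_
    rw [le_div_iff₀ hMpos]
    calc (μ (G M)).toReal * ((m M:ℝ)/M) * M = (μ (G M)).toReal * (m M : ℝ) := by
          field_simp
      _ ≤ _ := hbound M
  · -- upper bound
    intro a ha
    filter_upwards [eventually_ge_atTop 1] with M hM
    have hMpos : (0:ℝ) < M := by exact_mod_cast hM
    have hle : (∫ ω, (nr Y M ((M:ℝ) * C M) ω : ℝ) ∂μ) ≤ M := by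
      calc (∫ ω, (nr Y M ((M:ℝ) * C M) ω : ℝ) ∂μ) ≤ ∫ _, (M:ℝ) ∂μ := by
            refine integral_mono (hXint M) (integrable_const _) (fun ω => ?_)
            exact Nat.cast_le.mpr (nr_le Y M ((M:ℝ) * C M) ω)
        _ = M := by simp
    refine lt_of_le_of_lt ?_ ha
    rw [div_le_one hMpos]
    exact hle


theorem main_bridge {Ω : Type*} [MeasurableSpace Ω] (μ : Measure Ω) [IsProbabilityMeasure μ]
    (H : ℕ → Ω → ℝ) (hmeas : ∀ i, Measurable (H i))
    (hindep : iIndepFun H μ)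
    (hdist : ∀ i, Measure.map (H i) μ = expMeasure 1)
    (snr : ℝ) (hsnr : 0 < snr) (ε : ℝ) (hε : ε ∈ Set.Ioo (0:ℝ) (1/2))
    (C : ℕ → ℝ)
    (hC : ∀ M, 1 ≤ M → 0 < C M ∧
      (μ {ω | (1 / (M:ℝ)) * ∑ i ∈ Finset.range M,
          Real.logb 2 (1 + snr * H i ω) ≤ C M}).toReal = ε) :
    Tendsto
      (fun M : ℕ =>
        (∫ ω, (nr (fun i ω => Real.logb 2 (1 + snr * H i ω)) M ((M : ℝ) * C M) ω : ℝ) ∂μ) / (M : ℝ))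
      atTop (𝓝 1) := by
  obtain ⟨hε0, hεhalf⟩ := hε
  have hlog2 : (0:ℝ) < Real.log 2 := Real.log_pos one_lt_two
  have hgmeas : Measurable (fun x : ℝ => Real.logb 2 (1 + snr * x)) := by
    have h1 : Measurable fun x : ℝ => Real.log (1 + snr * x) :=
      Real.measurable_log.comp (measurable_const.add (measurable_const.mul measurable_id))
    simpa [Real.logb] using h1.div_const (Real.log 2)
  have hYmeas : ∀ i, Measurable (fun ω => Real.logb 2 (1 + snr * H i ω)) :=
    fun i => hgmeas.comp (hmeas i)
  have hHzero : ∀ i, μ {ω | H i ω ≤ 0} = 0 := by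
    intro i
    have h1 : {ω | H i ω ≤ 0} = H i ⁻¹' (Set.Iic 0) := rfl
    rw [h1, ← Measure.map_apply (hmeas i) measurableSet_Iic, hdist i, expMeasure_Iic_zero]
  have hHnn : ∀ᵐ ω ∂μ, ∀ i, 0 ≤ H i ω := by
    rw [ae_all_iff]
    intro i
    rw [ae_iff]
    refine measure_mono_null ?_ (hHzero i)
    intro ω hω
    simp only [Set.mem_setOf_eq, not_le] at hω
    exact le_of_lt hω
  have hYnn : ∀ᵐ ω ∂μ, ∀ i, 0 ≤ Real.logb 2 (1 + snr * H i ω) := by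
    filter_upwards [hHnn] with ω hω i
    exact Real.logb_nonneg one_lt_two (by nlinarith [hω i])
  have hHint : Integrable (H 0) μ := by
    have h1 := integrable_id_expMeasure
    rw [← hdist 0] at h1
    exact (integrable_map_measure aestronglyMeasurable_id (hmeas 0).aemeasurable).mp h1
  have hYint : Integrable (fun ω => Real.logb 2 (1 + snr * H 0 ω)) μ := by
    refine Integrable.mono' (hHint.const_mul (snr / Real.log 2))
      ((hYmeas 0).aestronglyMeasurable) ?_
    filter_upwards [hHnn] with ω hω
    have h0 : 0 ≤ H 0 ω := hω 0
    have h1 : (1:ℝ) ≤ 1 + snr * H 0 ω := by nlinarith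
    have hY0 : 0 ≤ Real.logb 2 (1 + snr * H 0 ω) := Real.logb_nonneg one_lt_two h1
    rw [Real.norm_eq_abs, abs_of_nonneg hY0]
    have hle : Real.log (1 + snr * H 0 ω) ≤ snr * H 0 ω := by
      have h2 := Real.log_le_sub_one_of_pos (x := 1 + snr * H 0 ω) (by linarith)
      linarith
    have h3 : Real.logb 2 (1 + snr * H 0 ω) = Real.log (1 + snr * H 0 ω) / Real.log 2 := rfl
    rw [h3, div_le_iff₀ hlog2]
    have h4 : snr / Real.log 2 * H 0 ω * Real.log 2 = snr * H 0 ω := by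
      field_simp
    linarith
  have hident : ∀ i, IdentDistrib (fun ω => Real.logb 2 (1 + snr * H i ω))
      (fun ω => Real.logb 2 (1 + snr * H 0 ω)) μ μ := by
    intro i
    have h1 : IdentDistrib (H i) (H 0) μ μ :=
      ⟨(hmeas i).aemeasurable, (hmeas 0).aemeasurable, by rw [hdist i, hdist 0]⟩
    exact h1.comp hgmeas
  have hpair : Pairwise (Function.onFun (IndepFun · · μ) fun i ω => Real.logb 2 (1 + snr * H i ω)) :=
    fun i j hij => (hindep.indepFun hij).comp hgmeas hgmeas
  have hLLN := strong_law_ae_real _ hYint hpair hident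
  have hcpos : 0 < ∫ ω, Real.logb 2 (1 + snr * H 0 ω) ∂μ := by
    have hYnn0 : 0 ≤ᵐ[μ] fun ω => Real.logb 2 (1 + snr * H 0 ω) := by
      filter_upwards [hHnn] with ω hω
      exact Real.logb_nonneg one_lt_two (by nlinarith [hω 0])
    rw [integral_pos_iff_support_of_nonneg_ae hYnn0 hYint]
    have hsub : {ω | 0 < H 0 ω} ⊆ Function.support (fun ω => Real.logb 2 (1 + snr * H 0 ω)) := by
      intro ω hω
      have h1 : (0:ℝ) < H 0 ω := hω
      exact ne_of_gt (Real.logb_pos one_lt_two (by nlinarith))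
    have h1 : μ {ω | 0 < H 0 ω} ≠ 0 := by
      intro h0
      have huniv : (Set.univ : Set Ω) ⊆ {ω | H 0 ω ≤ 0} ∪ {ω | 0 < H 0 ω} := by
        intro ω _
        by_cases h : 0 < H 0 ω
        · exact Or.inr h
        · exact Or.inl (not_lt.mp h)
      have h2 := (measure_mono huniv).trans (measure_union_le (μ := μ) _ _)
      rw [hHzero 0, h0, add_zero, measure_univ] at h2
      simp at h2
    exact lt_of_lt_of_le (pos_iff_ne_zero.mpr h1) (measure_mono hsub)
  exact aux_main μ (fun i ω => Real.logb 2 (1 + snr * H i ω)) hYmeas hYnn _ hcpos hLLN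
    ε hε0 (by linarith) C (fun M hM => (hC M hM).2)

end Aux

/-- for fixed `SNR > 0` and `ε ∈ (0, 1/2)`, with `R_init = M·C_ε^M(SNR)` the
expected number of rounds is asymptotically full: `E[X]/M → 1` as `M → ∞`. -/
theorem expected_rounds_asymptotically_full
    {Ω : Type*} [MeasurableSpace Ω] (μ : Measure Ω) [IsProbabilityMeasure μ]
    (H : ℕ → Ω → ℝ) (hmeas : ∀ i, Measurable (H i))
    (hindep : iIndepFun H μ)
    (hdist : ∀ i, Measure.map (H i) μ = expMeasure 1)
    (snr : ℝ) (hsnr : 0 < snr) (ε : ℝ) (hε : ε ∈ Set.Ioo (0:ℝ) (1/2))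
    (C : ℕ → ℝ)
    (hC : ∀ M, 1 ≤ M → 0 < C M ∧
      (μ {ω | (1 / (M:ℝ)) * ∑ i ∈ Finset.range M,
          Real.logb 2 (1 + snr * H i ω) ≤ C M}).toReal = ε) :
    Tendsto
      (fun M : ℕ =>
        (∫ ω, (numRounds H M snr ((M : ℝ) * C M) ω : ℝ) ∂μ) / (M : ℝ))
      atTop (𝓝 1) := by
  exact main_bridge μ H hmeas hindep hdist snr hsnr ε hε C hC
end

section
/- (Theorem 3, first part) Fix an integer M ≥ 1 and ε ∈ (0,1). With initial rate R_init = M·C_ε^M(SNR), the expected number of H-ARQ rounds converges to the maximum as the SNR grows: lim_{SNR→∞} E[X(M·C_ε^M(SNR), SNR)] = M. -/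
open MeasureTheory ProbabilityTheory Real Filter Topology Set
open scoped ENNReal

lemma expMeasure_Iic (x : ℝ) :
    expMeasure 1 (Iic x) = ENNReal.ofReal (if 0 ≤ x then 1 - rexp (-x) else 0) := by
  haveI := isProbabilityMeasure_expMeasure one_pos
  have h := cdf_expMeasure_eq one_pos x
  rw [cdf_eq_real, measureReal_def, one_mul] at h
  rw [← h, ENNReal.ofReal_toReal (measure_ne_top _ _)]

lemma expMeasure_Ioi (x : ℝ) (hx : 0 ≤ x) :
    expMeasure 1 (Ioi x) = ENNReal.ofReal (rexp (-x)) := by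
  haveI := isProbabilityMeasure_expMeasure one_pos
  have hc : Ioi x = (Iic x)ᶜ := by simp
  rw [hc, measure_compl measurableSet_Iic (measure_ne_top _ _), measure_univ,
    expMeasure_Iic, if_pos hx, ← ENNReal.ofReal_one,
    ← ENNReal.ofReal_sub _ (sub_nonneg.mpr (Real.exp_le_one_iff.mpr (by linarith)))]
  congr 1; ring

lemma numRounds_eq_count {Ω : Type*} (H : ℕ → Ω → ℝ) (M : ℕ) (snr R : ℝ) (ω : Ω)
    (hR : 0 ≤ R) (hpos : ∀ i, 0 ≤ snr * H i ω) :
    (numRounds H M snr R ω : ℝ) =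
      ∑ k ∈ Finset.range M,
        (if (∑ i ∈ Finset.range k, Real.logb 2 (1 + snr * H i ω)) ≤ R then (1:ℝ) else 0) := by
  set S : ℕ → ℝ := fun k => ∑ i ∈ Finset.range k, Real.logb 2 (1 + snr * H i ω) with hS
  have hterm : ∀ i, 0 ≤ Real.logb 2 (1 + snr * H i ω) := fun i =>
    Real.logb_nonneg one_lt_two (by linarith [hpos i])
  have hmono : Monotone S := fun a b hab =>
    Finset.sum_le_sum_of_subset_of_nonneg (Finset.range_subset_range.2 hab) (fun i _ _ => hterm i)
  set A : Set ℕ := {M} ∪ {m | 1 ≤ m ∧ R < S m} with hA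
  have hMA : M ∈ A := Or.inl rfl
  set j : ℕ := sInf A with hj
  have hjM : j ≤ M := Nat.sInf_le hMA
  have key : ∀ k, k < M → ((S k ≤ R) ↔ k < j) := by
    intro k hk
    constructor
    · intro hSk
      by_contra hlt
      push_neg at hlt
      have hjA : j ∈ A := Nat.sInf_mem ⟨M, hMA⟩
      rcases hjA with h1 | h2
      · simp only [Set.mem_singleton_iff] at h1; omega
      · have : S j ≤ S k := hmono hlt
        have : R < S k := lt_of_lt_of_le h2.2 this
        linarith
    · intro hkj
      rcases Nat.eq_zero_or_pos k with rfl | hk1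
      · simpa [hS] using hR
      · have hnA : k ∉ A := Nat.notMem_of_lt_sInf hkj
        have hn2 : ¬ (1 ≤ k ∧ R < S k) := fun h => hnA (Or.inr h)
        push_neg at hn2
        exact hn2 hk1
  have : numRounds H M snr R ω = j := rfl
  rw [this]
  have hsum : ∀ k ∈ Finset.range M,
      (if S k ≤ R then (1:ℝ) else 0) = (if k < j then (1:ℝ) else 0) := by
    intro k hk
    simp only [Finset.mem_range] at hk
    by_cases h : S k ≤ R
    · rw [if_pos h, if_pos ((key k hk).1 h)]
    · rw [if_neg h, if_neg (fun hlt => h ((key k hk).2 hlt))]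
  rw [Finset.sum_congr rfl hsum, Finset.sum_boole]
  have : (Finset.range M).filter (fun k => k < j) = Finset.range j := by
    ext k; simp only [Finset.mem_filter, Finset.mem_range]
    exact ⟨fun h => h.2, fun h => ⟨lt_of_lt_of_le h hjM, h⟩⟩
  rw [this]
  simp

/-- Theorem 3, first part: with `R_init = M·C_ε^M(SNR)`, the expected number of
H-ARQ rounds converges to `M` as `SNR → ∞`. -/
theorem expected_rounds_tendsto_M_high_snr
    {Ω : Type*} [MeasurableSpace Ω] (μ : Measure Ω) [IsProbabilityMeasure μ]
    (H : ℕ → Ω → ℝ) (hmeas : ∀ i, Measurable (H i))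
    (hindep : iIndepFun H μ)
    (hdist : ∀ i, Measure.map (H i) μ = expMeasure 1)
    (M : ℕ) (hM : 1 ≤ M) (ε : ℝ) (hε : ε ∈ Set.Ioo (0:ℝ) 1)
    (C : ℝ → ℝ)
    (hC : ∀ snr > (0:ℝ), 0 < C snr ∧
      (μ {ω | (1 / (M:ℝ)) * ∑ i ∈ Finset.range M,
          Real.logb 2 (1 + snr * H i ω) ≤ C snr}).toReal = ε) :
    Tendsto
      (fun snr : ℝ => ∫ ω, (numRounds H M snr ((M : ℝ) * C snr) ω : ℝ) ∂μ)
      atTop (𝓝 (M : ℝ)) := by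
  obtain ⟨hε0, hε1⟩ := hε
  have hM0 : (0:ℝ) < M := by exact_mod_cast hM
  set S : ℕ → ℝ → Ω → ℝ :=
    fun k snr ω => ∑ i ∈ Finset.range k, Real.logb 2 (1 + snr * H i ω) with hSdef
  have hSmeas : ∀ k snr, Measurable (S k snr) := by
    intro k snr
    apply Finset.measurable_sum
    intro i _
    have h : (fun ω => Real.logb 2 (1 + snr * H i ω))
        = fun ω => Real.log (1 + snr * H i ω) / Real.log 2 := rfl
    rw [h]
    exact (Real.measurable_log.comp (((hmeas i).const_mul snr).const_add 1)).div_const _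
  -- tail probabilities of each H i
  have htail : ∀ (i : ℕ) (c : ℝ), 0 ≤ c → μ {ω | c < H i ω} = ENNReal.ofReal (rexp (-c)) := by
    intro i c hc
    have h : {ω | c < H i ω} = H i ⁻¹' (Set.Ioi c) := rfl
    rw [h, ← Measure.map_apply (hmeas i) measurableSet_Ioi, hdist i, expMeasure_Ioi c hc]
  -- a.e. positivity
  have hae : ∀ᵐ ω ∂μ, ∀ i, 0 < H i ω := by
    rw [ae_all_iff]
    intro i
    have h : {ω | ¬ 0 < H i ω} = H i ⁻¹' (Set.Iic 0) := by
      ext ω; simp [Set.mem_setOf_eq, not_lt]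
    rw [ae_iff, h, ← Measure.map_apply (hmeas i) measurableSet_Iic, hdist i,
      expMeasure_Iic, if_pos le_rfl]
    simp
  -- choice of q
  obtain ⟨q, hq⟩ : ∃ q : ℝ,
      μ {ω | (∑ i ∈ Finset.range M, Real.logb 2 (H i ω)) ≤ q} < ENNReal.ofReal ε := by
    set Y : Ω → ℝ := fun ω => ∑ i ∈ Finset.range M, Real.logb 2 (H i ω) with hY
    have hYmeas : Measurable Y := by
      apply Finset.measurable_sum
      intro i _
      have h : (fun ω => Real.logb 2 (H i ω)) = fun ω => Real.log (H i ω) / Real.log 2 := rfl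
      rw [h]
      exact (Real.measurable_log.comp (hmeas i)).div_const _
    have hanti : Antitone fun n : ℕ => Y ⁻¹' Iic (-(n:ℝ)) := by
      intro n m hnm ω hω
      simp only [Set.mem_preimage, Set.mem_Iic] at hω ⊢
      have : -(m:ℝ) ≤ -(n:ℝ) := by exact_mod_cast neg_le_neg (Nat.cast_le.mpr hnm)
      linarith
    have hempty : ⋂ n : ℕ, Y ⁻¹' Iic (-(n:ℝ)) = ∅ := by
      ext ω
      simp only [Set.mem_iInter, Set.mem_preimage, Set.mem_Iic, Set.mem_empty_iff_false,
        iff_false, not_forall]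
      obtain ⟨n, hn⟩ := exists_nat_gt (-(Y ω))
      exact ⟨n, by push_neg; linarith⟩
    have htend := tendsto_measure_iInter_atTop
      (fun n => (hYmeas measurableSet_Iic).nullMeasurableSet) hanti ⟨0, measure_ne_top μ _⟩
    rw [hempty, measure_empty] at htend
    have hpos : (0:ℝ≥0∞) < ENNReal.ofReal ε := ENNReal.ofReal_pos.mpr hε0
    obtain ⟨n, hn⟩ := (htend.eventually_lt_const hpos).exists
    exact ⟨-(n:ℝ), hn⟩
  -- rewrite the hC set
  have hCset : ∀ snr : ℝ, 0 < snr →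
      (μ {ω | S M snr ω ≤ (M:ℝ) * C snr}).toReal = ε := by
    intro snr h0
    have h := (hC snr h0).2
    have hs : {ω | (1 / (M:ℝ)) * S M snr ω ≤ C snr}
        = {ω | S M snr ω ≤ (M:ℝ) * C snr} := by
      ext ω
      simp only [Set.mem_setOf_eq]
      rw [mul_comm (1/(M:ℝ)), mul_one_div, div_le_iff₀ hM0, mul_comm]
    rw [← hs]
    exact h
  -- lower bound on M * C snr
  have hClow : ∀ snr : ℝ, 1 < snr → (M:ℝ) * Real.logb 2 snr + q ≤ (M:ℝ) * C snr := by
    intro snr h1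
    have h0 : (0:ℝ) < snr := lt_trans one_pos h1
    by_contra hlt
    push_neg at hlt
    have hsub : {ω | S M snr ω ≤ (M:ℝ) * Real.logb 2 snr + q} ≤ᵐ[μ]
        {ω | (∑ i ∈ Finset.range M, Real.logb 2 (H i ω)) ≤ q} := by
      filter_upwards [hae] with ω hω
      intro hmem
      have h : S M snr ω ≤ (M:ℝ) * Real.logb 2 snr + q := hmem
      show (∑ i ∈ Finset.range M, Real.logb 2 (H i ω)) ≤ q
      have hterm : ∀ i ∈ Finset.range M,
          Real.logb 2 snr + Real.logb 2 (H i ω) ≤ Real.logb 2 (1 + snr * H i ω) := by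
        intro i _
        rw [← Real.logb_mul (ne_of_gt h0) (ne_of_gt (hω i))]
        exact Real.logb_le_logb_of_le one_lt_two (mul_pos h0 (hω i)) (by linarith)
      have hsum := Finset.sum_le_sum hterm
      rw [Finset.sum_add_distrib, Finset.sum_const, Finset.card_range, nsmul_eq_mul] at hsum
      have : S M snr ω = ∑ i ∈ Finset.range M, Real.logb 2 (1 + snr * H i ω) := rfl
      linarith [hsum, h]
    have hmono1 : μ {ω | S M snr ω ≤ (M:ℝ) * C snr}
        ≤ μ {ω | S M snr ω ≤ (M:ℝ) * Real.logb 2 snr + q} := by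
      apply measure_mono
      intro ω hω
      simp only [Set.mem_setOf_eq] at hω ⊢
      linarith
    have hmono2 := measure_mono_ae hsub
    have hlt2 : (μ {ω | S M snr ω ≤ (M:ℝ) * C snr}).toReal < ε := by
      calc (μ {ω | S M snr ω ≤ (M:ℝ) * C snr}).toReal
          ≤ (μ {ω | (∑ i ∈ Finset.range M, Real.logb 2 (H i ω)) ≤ q}).toReal :=
            ENNReal.toReal_mono (measure_ne_top _ _) (le_trans hmono1 hmono2)
        _ < ε := ENNReal.toReal_lt_of_lt_ofReal hq
    rw [hCset snr h0] at hlt2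
    exact lt_irrefl _ hlt2
  -- each term tends to 1
  have hterm_tendsto : ∀ k, k < M →
      Tendsto (fun snr => (μ {ω | S k snr ω ≤ (M:ℝ) * C snr}).toReal) atTop (𝓝 1) := by
    intro k hkM
    rcases Nat.eq_zero_or_pos k with rfl | hk1
    · apply Tendsto.congr' (f₁ := fun _ => (1:ℝ)) _ tendsto_const_nhds
      filter_upwards [eventually_gt_atTop (0:ℝ)] with snr h0
      have hCpos := (hC snr h0).1
      have : {ω | S 0 snr ω ≤ (M:ℝ) * C snr} = Set.univ := by
        ext ω
        simp only [Set.mem_setOf_eq, Set.mem_univ, iff_true, hSdef]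
        simp only [Finset.range_zero, Finset.sum_empty]
        positivity
      rw [this, measure_univ, ENNReal.toReal_one]
    · -- k ≥ 1
      have hk0 : (0:ℝ) < k := by exact_mod_cast hk1
      set t : ℝ → ℝ := fun snr => (M:ℝ) * Real.logb 2 snr + q with ht
      set c : ℝ → ℝ := fun snr => ((2:ℝ) ^ (t snr / k) - 1) / snr with hc
      have ha : (0:ℝ) < (M:ℝ)/k - 1 := by
        have : (1:ℝ) < (M:ℝ)/k := (one_lt_div hk0).mpr (by exact_mod_cast hkM)
        linarith
      have hcalc : ∀ snr : ℝ, 1 < snr →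
          c snr = snr ^ ((M:ℝ)/k - 1) * (2:ℝ) ^ (q/k) - 1/snr := by
        intro snr h1
        have h0 : (0:ℝ) < snr := lt_trans one_pos h1
        have he : t snr / k = Real.logb 2 snr * ((M:ℝ)/k) + q/k := by
          field_simp [ht]; ring
        have hcs : c snr = ((2:ℝ) ^ (t snr / k) - 1) / snr := rfl
        rw [hcs, he, Real.rpow_add two_pos, Real.rpow_mul (by norm_num : (0:ℝ) ≤ 2),
          Real.rpow_logb two_pos (by norm_num) h0, sub_div]
        rw [Real.rpow_sub h0, Real.rpow_one]
        ring
      have htendc : Tendsto c atTop atTop := by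
        apply tendsto_atTop_mono' atTop
          (f₁ := fun snr => snr ^ ((M:ℝ)/k - 1) * (2:ℝ) ^ (q/k) + (-1))
        · filter_upwards [eventually_gt_atTop (1:ℝ)] with snr h1
          rw [hcalc snr h1]
          have : 1/snr ≤ 1 := by
            rw [div_le_one (lt_trans one_pos h1)]; linarith
          linarith
        · exact tendsto_atTop_add_const_right atTop (-1)
            ((tendsto_rpow_atTop ha).atTop_mul_const (Real.rpow_pos_of_pos two_pos _))
      -- eventual bound on complement measure
      have hbound : ∀ᶠ snr in atTop,
          (μ {ω | ¬ (S k snr ω ≤ (M:ℝ) * C snr)}).toReal ≤ (k:ℝ) * rexp (-(c snr)) := by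
        have hct : Tendsto t atTop atTop := by
          apply tendsto_atTop_add_const_right
          exact (tendsto_logb_atTop one_lt_two).const_mul_atTop hM0
        filter_upwards [eventually_gt_atTop (1:ℝ), htendc.eventually_ge_atTop 0,
          hct.eventually_ge_atTop 0] with snr h1 hcge htge
        have h0 : (0:ℝ) < snr := lt_trans one_pos h1
        have hsubae : {ω | ¬ (S k snr ω ≤ (M:ℝ) * C snr)} ≤ᵐ[μ]
            ⋃ i ∈ Finset.range k, {ω | c snr < H i ω} := by
          filter_upwards [hae] with ω hω
          intro hmem
          simp only [Set.mem_setOf_eq, not_le] at hmem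
          have h2 : t snr < S k snr ω := lt_of_le_of_lt (hClow snr h1) hmem
          have hex : ∃ i ∈ Finset.range k, t snr / k < Real.logb 2 (1 + snr * H i ω) := by
            by_contra hno
            push_neg at hno
            have : S k snr ω ≤ ∑ _i ∈ Finset.range k, t snr / k :=
              Finset.sum_le_sum hno
            rw [Finset.sum_const, Finset.card_range, nsmul_eq_mul,
              mul_div_cancel₀ _ (ne_of_gt hk0)] at this
            linarith
          obtain ⟨i, hik, hilt⟩ := hex
          have hx : (0:ℝ) < 1 + snr * H i ω := by
            have := mul_pos h0 (hω i); linarith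
          have h3 : (2:ℝ) ^ (t snr / k) < 1 + snr * H i ω :=
            (Real.lt_logb_iff_rpow_lt one_lt_two hx).mp hilt
          have h4 : c snr < H i ω := by
            rw [hc, div_lt_iff₀ h0]
            nlinarith
          exact Set.mem_biUnion hik h4
        have hle : μ {ω | ¬ (S k snr ω ≤ (M:ℝ) * C snr)}
            ≤ ENNReal.ofReal ((k:ℝ) * rexp (-(c snr))) := by
          calc μ {ω | ¬ (S k snr ω ≤ (M:ℝ) * C snr)}
              ≤ μ (⋃ i ∈ Finset.range k, {ω | c snr < H i ω}) := measure_mono_ae hsubae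
            _ ≤ ∑ i ∈ Finset.range k, μ {ω | c snr < H i ω} :=
                measure_biUnion_finset_le _ _
            _ = ∑ _i ∈ Finset.range k, ENNReal.ofReal (rexp (-(c snr))) := by
                exact Finset.sum_congr rfl fun i _ => htail i (c snr) hcge
            _ = (k:ℝ≥0∞) * ENNReal.ofReal (rexp (-(c snr))) := by
                rw [Finset.sum_const, Finset.card_range, nsmul_eq_mul]
            _ = ENNReal.ofReal ((k:ℝ) * rexp (-(c snr))) := by
                rw [ENNReal.ofReal_mul (by positivity), ENNReal.ofReal_natCast]
        exact ENNReal.toReal_le_of_le_ofReal (by positivity) hle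
      have hto0 : Tendsto
          (fun snr => (μ {ω | ¬ (S k snr ω ≤ (M:ℝ) * C snr)}).toReal) atTop (𝓝 0) := by
        apply squeeze_zero' (Eventually.of_forall fun _ => ENNReal.toReal_nonneg) hbound
        have hexp : Tendsto (fun snr => rexp (-(c snr))) atTop (𝓝 0) :=
          Real.tendsto_exp_atBot.comp (tendsto_neg_atBot_iff.mpr htendc)
        have := hexp.const_mul (k:ℝ)
        simpa using this
      have hflip : ∀ snr : ℝ, (μ {ω | S k snr ω ≤ (M:ℝ) * C snr}).toReal
          = 1 - (μ {ω | ¬ (S k snr ω ≤ (M:ℝ) * C snr)}).toReal := by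
        intro snr
        have hs : MeasurableSet {ω | S k snr ω ≤ (M:ℝ) * C snr} :=
          measurableSet_le (hSmeas k snr) measurable_const
        have hcompl : {ω | S k snr ω ≤ (M:ℝ) * C snr}ᶜ
            = {ω | ¬ (S k snr ω ≤ (M:ℝ) * C snr)} := by
          ext ω; simp [Set.mem_setOf_eq]
        have hadd := prob_add_prob_compl (μ := μ) hs
        rw [hcompl] at hadd
        have := congrArg ENNReal.toReal hadd
        rw [ENNReal.toReal_add (measure_ne_top _ _) (measure_ne_top _ _),
          ENNReal.toReal_one] at this
        linarith
      have : Tendsto (fun snr => 1 - (μ {ω | ¬ (S k snr ω ≤ (M:ℝ) * C snr)}).toReal)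
          atTop (𝓝 1) := by
        simpa using hto0.const_sub (1:ℝ)
      exact this.congr fun snr => (hflip snr).symm
  -- integral formula
  have hInt : (fun snr : ℝ => ∫ ω, (numRounds H M snr ((M : ℝ) * C snr) ω : ℝ) ∂μ)
      =ᶠ[atTop] fun snr =>
        ∑ k ∈ Finset.range M, (μ {ω | S k snr ω ≤ (M:ℝ) * C snr}).toReal := by
    filter_upwards [eventually_gt_atTop (0:ℝ)] with snr h0
    have hCpos := (hC snr h0).1
    have hR : 0 ≤ (M:ℝ) * C snr := by positivity
    have h1 : ∫ ω, (numRounds H M snr ((M : ℝ) * C snr) ω : ℝ) ∂μ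
        = ∫ ω, (∑ k ∈ Finset.range M,
            if S k snr ω ≤ (M:ℝ) * C snr then (1:ℝ) else 0) ∂μ := by
      apply integral_congr_ae
      filter_upwards [hae] with ω hω
      exact numRounds_eq_count H M snr _ ω hR
        (fun i => mul_nonneg (le_of_lt h0) (le_of_lt (hω i)))
    rw [h1, integral_finset_sum]
    · apply Finset.sum_congr rfl
      intro k _
      have hs : MeasurableSet {ω | S k snr ω ≤ (M:ℝ) * C snr} :=
        measurableSet_le (hSmeas k snr) measurable_const
      have hind : (fun ω => if S k snr ω ≤ (M:ℝ) * C snr then (1:ℝ) else 0)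
          = Set.indicator {ω | S k snr ω ≤ (M:ℝ) * C snr} (fun _ => (1:ℝ)) := by
        ext ω; simp [Set.indicator_apply, Set.mem_setOf_eq]
      rw [hind, integral_indicator_const _ hs, smul_eq_mul, mul_one, measureReal_def]
    · intro k _
      have hs : MeasurableSet {ω | S k snr ω ≤ (M:ℝ) * C snr} :=
        measurableSet_le (hSmeas k snr) measurable_const
      have hind : (fun ω => if S k snr ω ≤ (M:ℝ) * C snr then (1:ℝ) else 0)
          = Set.indicator {ω | S k snr ω ≤ (M:ℝ) * C snr} (fun _ => (1:ℝ)) := by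
        ext ω; simp [Set.indicator_apply, Set.mem_setOf_eq]
      rw [hind]
      exact (integrable_const (1:ℝ)).indicator hs
  have hsum_tendsto : Tendsto
      (fun snr => ∑ k ∈ Finset.range M, (μ {ω | S k snr ω ≤ (M:ℝ) * C snr}).toReal)
      atTop (𝓝 (M:ℝ)) := by
    have h := tendsto_finset_sum (Finset.range M)
      (fun k hk => hterm_tendsto k (Finset.mem_range.mp hk))
    simpa using h
  exact Filter.Tendsto.congr' hInt.symm hsum_tendsto
end

section
/- (Lemma, Appendix D, case k < r) Let r > 0 and let R : (0,∞) → (0,∞) satisfy lim_{SNR→∞} R(SNR)/log₂(SNR) = r. Then for every positive integer k with k < r, lim_{SNR→∞} P[ Σ_{i=1}^{k} log₂(1 + SNR·H_i) ≤ R(SNR) ] = 1. -/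
open MeasureTheory ProbabilityTheory Real Filter Topology
open scoped ENNReal

/-- Lemma, Appendix D, case `k < r`: if the rate function has pre-log `r`, then
for every positive integer `k < r`, `P[Σ_{i=1}^k log₂(1+SNR·Hᵢ) ≤ R(SNR)] → 1` as `SNR → ∞`. -/
theorem outage_prob_tendsto_one_of_k_lt_prelog
    {Ω : Type*} [MeasurableSpace Ω] (μ : Measure Ω) [IsProbabilityMeasure μ]
    (H : ℕ → Ω → ℝ) (hmeas : ∀ i, Measurable (H i))
    (hindep : iIndepFun H μ)
    (hdist : ∀ i, Measure.map (H i) μ = expMeasure 1)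
    (r : ℝ) (hr : 0 < r) (R : ℝ → ℝ) (hRpos : ∀ snr > (0:ℝ), 0 < R snr)
    (hprelog : Tendsto (fun snr => R snr / Real.logb 2 snr) atTop (𝓝 r))
    (k : ℕ) (hk : 1 ≤ k) (hkr : (k : ℝ) < r) :
    Tendsto
      (fun snr : ℝ =>
        (μ {ω | ∑ i ∈ Finset.range k, Real.logb 2 (1 + snr * H i ω) ≤ R snr}).toReal)
      atTop (𝓝 1) := by
  classical
  have hk0 : (0:ℝ) < k := by
    have : (1:ℝ) ≤ k := by exact_mod_cast hk
    linarith
  set ν : Measure ℝ := expMeasure 1 with hνdef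
  have hprobν : IsProbabilityMeasure ν := isProbabilityMeasure_expMeasure one_pos
  have hIio : ν (Set.Iio 0) = 0 := by
    rw [hνdef, expMeasure, gammaMeasure, withDensity_apply _ measurableSet_Iio]
    exact lintegral_gammaPDF_of_nonpos le_rfl
  -- choose the exponent c with 1 < c and k*c < r
  set c : ℝ := (r / k + 1) / 2 with hcdef
  have hrk : 1 < r / k := (one_lt_div hk0).mpr hkr
  have hc1 : 1 < c := by rw [hcdef]; linarith
  have hkceq : (k:ℝ) * c = (r + k) / 2 := by
    rw [hcdef]; field_simp
  have hkc : (k:ℝ) * c < r := by rw [hkceq]; linarith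
  -- the threshold
  set M : ℝ → ℝ := fun snr => snr ^ (c - 1) + (-1) with hMdef
  have hM : Tendsto M atTop atTop :=
    tendsto_atTop_add_const_right _ (-1) (tendsto_rpow_atTop (by linarith))
  -- tail of the exponential goes to zero
  have hν0 : Tendsto (fun t : ℝ => ν (Set.Ioi t)) atTop (𝓝 0) := by
    have h1 : Tendsto (fun t : ℝ => ν (Set.Iic t)) atTop (𝓝 (1 : ℝ≥0∞)) := by
      have := tendsto_measure_Iic_atTop (μ := ν)
      rwa [measure_univ] at this
    have h2 : ∀ t : ℝ, ν (Set.Ioi t) = 1 - ν (Set.Iic t) := by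
      intro t
      rw [← Set.compl_Iic, measure_compl measurableSet_Iic (measure_ne_top _ _), measure_univ]
    have h3 : Tendsto (fun t : ℝ => 1 - ν (Set.Iic t)) atTop (𝓝 (1 - 1)) :=
      ENNReal.Tendsto.sub tendsto_const_nhds h1 (Or.inl ENNReal.one_ne_top)
    simp only [tsub_self] at h3
    exact h3.congr fun t => (h2 t).symm
  have htail : Tendsto (fun snr : ℝ => (ν (Set.Ioi (M snr))).toReal) atTop (𝓝 0) := by
    have := (ENNReal.tendsto_toReal (a := 0) (by simp)).comp (hν0.comp hM)
    exact this
  -- measurability of the events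
  have hSmeas : ∀ snr : ℝ, MeasurableSet
      {ω | ∑ i ∈ Finset.range k, Real.logb 2 (1 + snr * H i ω) ≤ R snr} := by
    intro snr
    apply measurableSet_le _ measurable_const
    apply Finset.measurable_sum
    intro i _
    have hmm : Measurable fun ω => Real.log (1 + snr * H i ω) :=
      Real.measurable_log.comp (measurable_const.add ((hmeas i).const_mul snr))
    simp only [Real.logb]
    exact hmm.div_const _
  -- per-coordinate bad-set bound
  have hbad : ∀ (snr : ℝ) (i : ℕ),
      μ (H i ⁻¹' (Set.Icc 0 (M snr))ᶜ) ≤ ν (Set.Ioi (M snr)) := by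
    intro snr i
    rw [← Measure.map_apply (hmeas i) measurableSet_Icc.compl, hdist i]
    have hsub : (Set.Icc 0 (M snr))ᶜ ⊆ Set.Iio 0 ∪ Set.Ioi (M snr) := by
      intro x hx
      simp only [Set.mem_compl_iff, Set.mem_Icc, not_and, not_le] at hx
      rcases lt_or_ge x 0 with h | h
      · exact Or.inl h
      · exact Or.inr (hx h)
    calc ν (Set.Icc 0 (M snr))ᶜ
        ≤ ν (Set.Iio 0 ∪ Set.Ioi (M snr)) := measure_mono hsub
      _ ≤ ν (Set.Iio 0) + ν (Set.Ioi (M snr)) := measure_union_le _ _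
      _ = ν (Set.Ioi (M snr)) := by rw [hIio, zero_add]
  -- eventual inclusion: complement of the event is inside the union of bad sets
  have hev : ∀ᶠ snr : ℝ in atTop,
      {ω | ∑ i ∈ Finset.range k, Real.logb 2 (1 + snr * H i ω) ≤ R snr}ᶜ ⊆
        ⋃ i ∈ Finset.range k, H i ⁻¹' (Set.Icc 0 (M snr))ᶜ := by
    filter_upwards [eventually_ge_atTop (2:ℝ),
      hprelog.eventually (eventually_gt_nhds hkc)] with snr h2 hRc
    intro ω hω
    simp only [Set.mem_compl_iff, Set.mem_setOf_eq, not_le] at hω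
    by_contra hcon
    simp only [Set.mem_iUnion, Set.mem_preimage, Set.mem_compl_iff, not_exists, not_not,
      exists_prop, not_and] at hcon
    have hsnr0 : (0:ℝ) < snr := by linarith
    have hsnr1 : (1:ℝ) < snr := by linarith
    have hlogb : 0 < Real.logb 2 snr := Real.logb_pos one_lt_two hsnr1
    have hterm : ∀ i ∈ Finset.range k,
        Real.logb 2 (1 + snr * H i ω) ≤ c * Real.logb 2 snr := by
      intro i hi
      obtain ⟨h0, hM'⟩ := hcon i hi
      have hpow : snr * snr ^ (c - 1) = snr ^ c := by
        have h := Real.rpow_add hsnr0 1 (c - 1)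
        rw [Real.rpow_one, show (1:ℝ) + (c - 1) = c by ring] at h
        exact h.symm
      have hle : 1 + snr * H i ω ≤ snr ^ c := by
        have h1 : snr * H i ω ≤ snr * (snr ^ (c - 1) + (-1)) :=
          mul_le_mul_of_nonneg_left hM' hsnr0.le
        have h2' : snr * (snr ^ (c - 1) + (-1)) = snr ^ c - snr := by
          rw [mul_add, hpow]; ring
        rw [h2'] at h1
        linarith
      have hpos : (0:ℝ) < 1 + snr * H i ω := by
        have := mul_nonneg hsnr0.le h0
        linarith
      calc Real.logb 2 (1 + snr * H i ω) ≤ Real.logb 2 (snr ^ c) :=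
            Real.logb_le_logb_of_le one_lt_two hpos hle
        _ = c * Real.logb 2 snr := by
            simp only [Real.logb]
            rw [Real.log_rpow hsnr0]
            ring
    have hsum : ∑ i ∈ Finset.range k, Real.logb 2 (1 + snr * H i ω) ≤
        (k : ℝ) * (c * Real.logb 2 snr) := by
      calc ∑ i ∈ Finset.range k, Real.logb 2 (1 + snr * H i ω)
          ≤ ∑ _i ∈ Finset.range k, c * Real.logb 2 snr := Finset.sum_le_sum hterm
        _ = (k : ℝ) * (c * Real.logb 2 snr) := by
            rw [Finset.sum_const, Finset.card_range, nsmul_eq_mul]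
    have hRge : (k : ℝ) * c * Real.logb 2 snr < R snr := by
      have := (lt_div_iff₀ hlogb).mp hRc
      linarith
    have : ∑ i ∈ Finset.range k, Real.logb 2 (1 + snr * H i ω) < R snr := by
      calc ∑ i ∈ Finset.range k, Real.logb 2 (1 + snr * H i ω)
          ≤ (k : ℝ) * (c * Real.logb 2 snr) := hsum
        _ = (k : ℝ) * c * Real.logb 2 snr := by ring
        _ < R snr := hRge
    linarith
  -- the complement probabilities tend to zero
  have hcompl : Tendsto (fun snr : ℝ =>
      (μ ({ω | ∑ i ∈ Finset.range k, Real.logb 2 (1 + snr * H i ω) ≤ R snr}ᶜ)).toReal)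
      atTop (𝓝 0) := by
    have hub : ∀ᶠ snr : ℝ in atTop,
        (μ ({ω | ∑ i ∈ Finset.range k, Real.logb 2 (1 + snr * H i ω) ≤ R snr}ᶜ)).toReal ≤
          (k : ℝ) * (ν (Set.Ioi (M snr))).toReal := by
      filter_upwards [hev] with snr hsub
      have h1 : μ ({ω | ∑ i ∈ Finset.range k, Real.logb 2 (1 + snr * H i ω) ≤ R snr}ᶜ)
          ≤ (k : ℝ≥0∞) * ν (Set.Ioi (M snr)) := by
        calc μ ({ω | ∑ i ∈ Finset.range k, Real.logb 2 (1 + snr * H i ω) ≤ R snr}ᶜ)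
            ≤ μ (⋃ i ∈ Finset.range k, H i ⁻¹' (Set.Icc 0 (M snr))ᶜ) := measure_mono hsub
          _ ≤ ∑ i ∈ Finset.range k, μ (H i ⁻¹' (Set.Icc 0 (M snr))ᶜ) :=
              measure_biUnion_finset_le _ _
          _ ≤ ∑ _i ∈ Finset.range k, ν (Set.Ioi (M snr)) :=
              Finset.sum_le_sum fun i _ => hbad snr i
          _ = (k : ℝ≥0∞) * ν (Set.Ioi (M snr)) := by
              rw [Finset.sum_const, Finset.card_range, nsmul_eq_mul]
      have h2 : ((k : ℝ≥0∞) * ν (Set.Ioi (M snr))).toReal =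
          (k : ℝ) * (ν (Set.Ioi (M snr))).toReal := by
        simp [ENNReal.toReal_mul]
      calc (μ ({ω | ∑ i ∈ Finset.range k, Real.logb 2 (1 + snr * H i ω) ≤ R snr}ᶜ)).toReal
          ≤ ((k : ℝ≥0∞) * ν (Set.Ioi (M snr))).toReal :=
            ENNReal.toReal_mono (by
              exact ENNReal.mul_ne_top (ENNReal.natCast_ne_top k) (measure_ne_top _ _)) h1
        _ = (k : ℝ) * (ν (Set.Ioi (M snr))).toReal := h2
    have hlb : ∀ᶠ snr : ℝ in atTop,
        (0:ℝ) ≤ (μ ({ω | ∑ i ∈ Finset.range k,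
          Real.logb 2 (1 + snr * H i ω) ≤ R snr}ᶜ)).toReal :=
      Eventually.of_forall fun snr => ENNReal.toReal_nonneg
    have hmul : Tendsto (fun snr : ℝ => (k : ℝ) * (ν (Set.Ioi (M snr))).toReal)
        atTop (𝓝 0) := by
      have := htail.const_mul (k : ℝ)
      simpa using this
    exact tendsto_of_tendsto_of_tendsto_of_le_of_le' tendsto_const_nhds hmul hlb hub
  -- conclude
  have hkey : ∀ snr : ℝ,
      (μ {ω | ∑ i ∈ Finset.range k, Real.logb 2 (1 + snr * H i ω) ≤ R snr}).toReal =
      1 - (μ ({ω | ∑ i ∈ Finset.range k, Real.logb 2 (1 + snr * H i ω) ≤ R snr}ᶜ)).toReal := by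
    intro snr
    have h := measure_add_measure_compl (μ := μ) (hSmeas snr)
    rw [measure_univ] at h
    have h' := congrArg ENNReal.toReal h
    rw [ENNReal.toReal_add (measure_ne_top _ _) (measure_ne_top _ _), ENNReal.toReal_one] at h'
    linarith
  have : (fun snr : ℝ =>
      (μ {ω | ∑ i ∈ Finset.range k, Real.logb 2 (1 + snr * H i ω) ≤ R snr}).toReal) =
      fun snr : ℝ => 1 -
        (μ ({ω | ∑ i ∈ Finset.range k, Real.logb 2 (1 + snr * H i ω) ≤ R snr}ᶜ)).toReal :=
    funext hkey
  rw [this]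
  have := tendsto_const_nhds (x := (1:ℝ)) (f := atTop (α := ℝ)) |>.sub hcompl
  simpa using this
end

section
/- For every SNR > 0, every positive integer k, and every R > 0, the accumulated mutual information satisfies the lower bound P[ Σ_{i=1}^{k} log₂(1 + SNR·H_i) ≤ R ] ≥ ( 1 − exp( −(2^{R/k} − 1)/SNR ) )^k. -/
open MeasureTheory ProbabilityTheory Real Filter Topology

lemma expMeasure_Icc_eq {c : ℝ} (hc : 0 ≤ c) :
    expMeasure 1 (Set.Icc 0 c) = ENNReal.ofReal (1 - Real.exp (-c)) := by
  rw [expMeasure, gammaMeasure, withDensity_apply _ measurableSet_Icc]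
  have h : (∫⁻ x in Set.Icc 0 c, gammaPDF 1 1 x) = ∫⁻ x in Set.Iic c, exponentialPDF 1 x := by
    rw [lintegral_Iic_eq_lintegral_Iio_add_Icc _ hc,
      lintegral_exponentialPDF_of_nonpos le_rfl, zero_add]
    rfl
  rw [h, lintegral_exponentialPDF_eq_antiDeriv one_pos c, if_pos hc, one_mul]

/-- lower bound on the outage probability of the accumulated mutual information:
`P[Σ_{i=1}^k log₂(1+SNR·Hᵢ) ≤ R] ≥ (1 − exp(−(2^{R/k} − 1)/SNR))^k`. -/
theorem accumulated_mutual_info_prob_lower_bound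
    {Ω : Type*} [MeasurableSpace Ω] (μ : Measure Ω) [IsProbabilityMeasure μ]
    (H : ℕ → Ω → ℝ) (hmeas : ∀ i, Measurable (H i))
    (hindep : iIndepFun H μ)
    (hdist : ∀ i, Measure.map (H i) μ = expMeasure 1)
    (snr : ℝ) (hsnr : 0 < snr) (k : ℕ) (hk : 1 ≤ k) (R : ℝ) (hR : 0 < R) :
    (1 - Real.exp (-(((2:ℝ) ^ (R / (k:ℝ)) - 1) / snr))) ^ k ≤
      (μ {ω | ∑ i ∈ Finset.range k, Real.logb 2 (1 + snr * H i ω) ≤ R}).toReal := by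
  have hk0 : (0:ℝ) < (k:ℝ) := by exact_mod_cast hk
  have hRk : 0 < R / (k:ℝ) := div_pos hR hk0
  have h2 : (1:ℝ) < (2:ℝ) ^ (R / (k:ℝ)) := by
    exact (Real.one_lt_rpow_iff_of_pos (by norm_num)).mpr (Or.inl ⟨by norm_num, hRk⟩)
  set t : ℝ := ((2:ℝ) ^ (R / (k:ℝ)) - 1) / snr with ht
  have htpos : 0 < t := div_pos (by linarith) hsnr
  -- the intersection event
  have hsub : (⋂ i ∈ Finset.range k, H i ⁻¹' Set.Icc 0 t) ⊆
      {ω | ∑ i ∈ Finset.range k, Real.logb 2 (1 + snr * H i ω) ≤ R} := by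
    intro ω hω
    simp only [Set.mem_iInter, Set.mem_preimage, Set.mem_Icc] at hω
    simp only [Set.mem_setOf_eq]
    calc ∑ i ∈ Finset.range k, Real.logb 2 (1 + snr * H i ω)
        ≤ ∑ i ∈ Finset.range k, (R / (k:ℝ)) := by
          apply Finset.sum_le_sum
          intro i hi
          obtain ⟨h0, h1⟩ := hω i hi
          have hle : 1 + snr * H i ω ≤ (2:ℝ) ^ (R / (k:ℝ)) := by
            have : snr * H i ω ≤ snr * t := by nlinarith
            have hst : snr * t = (2:ℝ) ^ (R / (k:ℝ)) - 1 := by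
              rw [ht]; field_simp
            linarith
          have hm := Real.logb_le_logb_of_le (b := 2) (by norm_num) (by nlinarith [mul_nonneg hsnr.le h0]) hle
          rw [Real.logb_rpow (by norm_num) (by norm_num)] at hm
          exact hm
      _ = R := by rw [Finset.sum_const, Finset.card_range, nsmul_eq_mul]; field_simp
  have hmeasK : ∀ i, μ (H i ⁻¹' Set.Icc 0 t) = ENNReal.ofReal (1 - Real.exp (-t)) := by
    intro i
    rw [← Measure.map_apply (hmeas i) measurableSet_Icc, hdist i,
      expMeasure_Icc_eq htpos.le]
  have hinter : μ (⋂ i ∈ Finset.range k, H i ⁻¹' Set.Icc 0 t) =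
      ENNReal.ofReal (1 - Real.exp (-t)) ^ k := by
    rw [hindep.meas_biInter (fun i _ => ⟨Set.Icc 0 t, measurableSet_Icc, rfl⟩)]
    rw [Finset.prod_congr rfl (fun i _ => hmeasK i), Finset.prod_const, Finset.card_range]
  have hmono := measure_mono (μ := μ) hsub
  rw [hinter] at hmono
  have hne : μ {ω | ∑ i ∈ Finset.range k, Real.logb 2 (1 + snr * H i ω) ≤ R} ≠ ⊤ :=
    measure_ne_top μ _
  have := ENNReal.toReal_mono hne hmono
  rw [ENNReal.toReal_pow, ENNReal.toReal_ofReal (by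
    have := Real.exp_le_one_iff.mpr (neg_nonpos.mpr htpos.le); linarith)] at this
  convert this using 2
end
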